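/- arXiv:2509.07079 — 4 statements merged into one kernel-verified Lean document; each statement's English description precedes it below -/
import Mathlib

section
/- Let H(β) = H_C + H_R(β) + β·X·Y be a Hermitian operator on a tensor product Hilbert space ℋ_C ⊗ ℋ_R, where H_C acts on ℋ_C with unique (nondegenerate) ground state |0⟩_C of energy λ_C and spectral gap Δ > 0, H_R(β) acts on ℋ_R, X acts on ℋ_C with X|0⟩_C = 0, and Y acts on ℋ_R. If β·‖X‖·‖Y‖ < Δ, then every ground state of H(β) is of the form |0⟩_C ⊗ |ψ⟩_R with |ψ⟩_R a ground state of H_R(β), and the ground state energy of H(β) equals λ_C + min spec(H_R(β)). -/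
set_option linter.unusedSectionVars false


open Kronecker

/-- The operator (ℓ²→ℓ²) norm of a complex matrix. -/
noncomputable def opNorm {k : ℕ} (M : Matrix (Fin k) (Fin k) ℂ) : ℝ :=
  ‖Matrix.toEuclideanCLM (𝕜 := ℂ) M‖


namespace SF

variable {ι : Type*} [Fintype ι]

def Ev (v : ι → ℂ) : EuclideanSpace ℂ ι := WithLp.toLp 2 v

lemma Ev_apply (v : ι → ℂ) (i : ι) : Ev v i = v i := rfl

lemma inner_Ev (v w : ι → ℂ) : (inner ℂ (Ev v) (Ev w) : ℂ) = ∑ i, star (v i) * w i := by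
  simp [Ev, PiLp.inner_apply, RCLike.inner_apply, mul_comm]

lemma norm_sq_Ev (v : ι → ℂ) : ‖Ev v‖ ^ 2 = ∑ i, ‖v i‖ ^ 2 := by
  rw [EuclideanSpace.norm_eq]
  rw [Real.sq_sqrt (by positivity)]
  rfl

lemma mulVec_norm_le {k : ℕ} (M : Matrix (Fin k) (Fin k) ℂ) (v : Fin k → ℂ) :
    ‖Ev (M.mulVec v)‖ ≤ opNorm M * ‖Ev v‖ := by
  have h := (Matrix.toEuclideanCLM (𝕜 := ℂ) M).le_opNorm (Ev v)
  have he : Matrix.toEuclideanCLM (𝕜 := ℂ) M (Ev v) = Ev (M.mulVec v) := by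
    exact Matrix.toEuclideanCLM_toLp M v
  rw [he] at h
  exact h

end SF

namespace SF

lemma Ev_mulVec {k : ℕ} (M : Matrix (Fin k) (Fin k) ℂ) (v : Fin k → ℂ) :
    Ev (M.mulVec v) = Matrix.toEuclideanCLM (𝕜 := ℂ) M (Ev v) := by
  exact (Matrix.toEuclideanCLM_toLp M v).symm

lemma quad_expand {k : ℕ} {A : Matrix (Fin k) (Fin k) ℂ} (hA : A.IsHermitian)
    (u : Fin k → ℂ) :
    (inner ℂ (Ev u) (Ev (A.mulVec u)) : ℂ) =
      ∑ j, (hA.eigenvalues j : ℂ) * (‖hA.eigenvectorBasis.repr (Ev u) j‖ ^ 2 : ℝ) := by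
  set b := hA.eigenvectorBasis with hb
  set c : Fin k → ℂ := fun j => b.repr (Ev u) j with hc
  have hsum : (Ev u) = ∑ j, c j • b j := (b.sum_repr (Ev u)).symm
  have hT : Ev (A.mulVec u) = ∑ j, (c j * (hA.eigenvalues j : ℂ)) • b j := by
    rw [Ev_mulVec, hsum, map_sum]
    refine Finset.sum_congr rfl fun j _ => ?_
    rw [map_smul]
    have h3 : Matrix.toEuclideanCLM (𝕜 := ℂ) A (b j) = (hA.eigenvalues j : ℝ) • b j := by
      have h5 := hA.mulVec_eigenvectorBasis j
      have h4 := Ev_mulVec A ((hA.eigenvectorBasis j).ofLp)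
      rw [h5] at h4
      exact h4.symm
    rw [h3, mul_smul, Complex.coe_smul]
  rw [hT, inner_sum]
  refine Finset.sum_congr rfl fun j _ => ?_
  rw [inner_smul_right]
  have hbr : (inner ℂ (Ev u) (b j) : ℂ) = star (c j) := by
    rw [← inner_conj_symm]
    simp [hc, b.repr_apply_apply]
  rw [hbr]
  rw [mul_comm (c j) _, mul_assoc]
  congr 1
  rw [Complex.star_def, Complex.mul_conj]
  norm_cast
  rw [← Complex.sq_norm]

end SF

namespace SF

lemma quad_ge {k : ℕ} {A : Matrix (Fin k) (Fin k) ℂ} (hA : A.IsHermitian) (c : ℝ)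
    (u : Fin k → ℂ)
    (h : ∀ j, c * ‖hA.eigenvectorBasis.repr (Ev u) j‖ ^ 2 ≤
        hA.eigenvalues j * ‖hA.eigenvectorBasis.repr (Ev u) j‖ ^ 2) :
    c * ‖Ev u‖ ^ 2 ≤ (inner ℂ (Ev u) (Ev (A.mulVec u)) : ℂ).re := by
  have he := quad_expand hA u
  have hre : (inner ℂ (Ev u) (Ev (A.mulVec u)) : ℂ).re
      = ∑ j, hA.eigenvalues j * ‖hA.eigenvectorBasis.repr (Ev u) j‖ ^ 2 := by
    rw [he]
    rw [Complex.re_sum]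
    refine Finset.sum_congr rfl fun j _ => ?_
    norm_cast
  rw [hre]
  have hnorm : ‖Ev u‖ ^ 2 = ∑ j, ‖hA.eigenvectorBasis.repr (Ev u) j‖ ^ 2 := by
    rw [← hA.eigenvectorBasis.repr.norm_map (Ev u)]
    exact norm_sq_Ev _
  rw [hnorm, Finset.mul_sum]
  exact Finset.sum_le_sum fun j _ => h j

lemma eigvec_ne_zero {k : ℕ} {A : Matrix (Fin k) (Fin k) ℂ} (hA : A.IsHermitian) (j : Fin k) :
    (fun i => hA.eigenvectorBasis j i) ≠ 0 := by
  intro h0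
  have h1 : hA.eigenvectorBasis j = 0 := by
    ext i
    exact congrFun h0 i
  have := hA.eigenvectorBasis.orthonormal.1 j
  rw [h1] at this
  simp at this

lemma eigvec_eq {k : ℕ} {A : Matrix (Fin k) (Fin k) ℂ} (hA : A.IsHermitian) (j : Fin k) :
    A.mulVec (fun i => hA.eigenvectorBasis j i) =
      ((hA.eigenvalues j : ℝ) : ℂ) • (fun i => hA.eigenvectorBasis j i) := by
  have h5 := hA.mulVec_eigenvectorBasis j
  funext i
  have h6 : A.mulVec (fun i => hA.eigenvectorBasis j i) i
      = (hA.eigenvalues j : ℝ) • (hA.eigenvectorBasis j i) := congrFun h5 i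
  show _ = ((hA.eigenvalues j : ℝ) : ℂ) * (hA.eigenvectorBasis j i)
  rw [h6, Complex.real_smul]

/-- Lower bound for the `H_R` quadratic form. -/
lemma quadR {m : ℕ} {HR : Matrix (Fin m) (Fin m) ℂ} (hHRherm : HR.IsHermitian) {lamR : ℝ}
    (hlb : ∀ μ : ℝ, (∃ ψ : Fin m → ℂ, ψ ≠ 0 ∧ HR.mulVec ψ = (μ : ℂ) • ψ) → lamR ≤ μ)
    (ψ : Fin m → ℂ) :
    lamR * ‖Ev ψ‖ ^ 2 ≤ (inner ℂ (Ev ψ) (Ev (HR.mulVec ψ)) : ℂ).re := by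
  refine quad_ge hHRherm lamR ψ fun j => ?_
  have hj : lamR ≤ hHRherm.eigenvalues j :=
    hlb _ ⟨_, eigvec_ne_zero hHRherm j, eigvec_eq hHRherm j⟩
  have : (0 : ℝ) ≤ ‖hHRherm.eigenvectorBasis.repr (Ev ψ) j‖ ^ 2 := by positivity
  nlinarith

end SF

namespace SF

/-- Lower bound for the `H_C` quadratic form on the orthogonal complement of `gC`. -/
lemma quadC {n : ℕ} {HC : Matrix (Fin n) (Fin n) ℂ} (hHCherm : HC.IsHermitian)
    {lamC Δ : ℝ} {gC : Fin n → ℂ}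
    (hgap : ∀ (v : Fin n → ℂ) (μ : ℝ), v ≠ 0 → HC.mulVec v = (μ : ℂ) • v →
      μ = lamC ∨ lamC + Δ ≤ μ)
    (hsimple : ∀ v : Fin n → ℂ, HC.mulVec v = (lamC : ℂ) • v → ∃ c : ℂ, v = c • gC)
    (u : Fin n → ℂ) (horth : ∑ i, star (gC i) * u i = 0) :
    (lamC + Δ) * ‖Ev u‖ ^ 2 ≤ (inner ℂ (Ev u) (Ev (HC.mulVec u)) : ℂ).re := by
  refine quad_ge hHCherm (lamC + Δ) u fun j => ?_
  rcases hgap _ (hHCherm.eigenvalues j) (eigvec_ne_zero hHCherm j) (eigvec_eq hHCherm j)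
    with h | h
  · obtain ⟨c, hc⟩ := hsimple (fun i => hHCherm.eigenvectorBasis j i) (by
      have := eigvec_eq hHCherm j
      rwa [h] at this)
    have hrepr : hHCherm.eigenvectorBasis.repr (Ev u) j = 0 := by
      rw [hHCherm.eigenvectorBasis.repr_apply_apply]
      have hbj : hHCherm.eigenvectorBasis j = Ev (c • gC) := by
        ext i; exact congrFun hc i
      rw [hbj, inner_Ev]
      have hterm : ∀ i, star ((c • gC) i) * u i = star c * (star (gC i) * u i) := by
        intro i
        show star (c * gC i) * u i = _
        rw [star_mul', mul_assoc]
      rw [Finset.sum_congr rfl fun i _ => hterm i, ← Finset.mul_sum, horth, mul_zero]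
    rw [hrepr]
    simp
  · have h0 : (0 : ℝ) ≤ ‖hHCherm.eigenvectorBasis.repr (Ev u) j‖ ^ 2 := by positivity
    nlinarith

end SF

namespace SF

lemma kron_mulVec {n m : ℕ} (A : Matrix (Fin n) (Fin n) ℂ) (B : Matrix (Fin m) (Fin m) ℂ)
    (v : Fin n × Fin m → ℂ) (p : Fin n × Fin m) :
    (A ⊗ₖ B).mulVec v p = ∑ i, ∑ j, A p.1 i * B p.2 j * v (i, j) := by
  simp [Matrix.mulVec, dotProduct, Fintype.sum_prod_type, Matrix.kroneckerMap_apply,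
    mul_assoc]

lemma kron_one_right {n m : ℕ} (A : Matrix (Fin n) (Fin n) ℂ) (v : Fin n × Fin m → ℂ)
    (p : Fin n × Fin m) :
    (A ⊗ₖ (1 : Matrix (Fin m) (Fin m) ℂ)).mulVec v p = A.mulVec (fun i => v (i, p.2)) p.1 := by
  rw [kron_mulVec]
  simp [Matrix.mulVec, dotProduct, Matrix.one_apply, mul_ite, ite_mul, eq_comm]

lemma kron_one_left {n m : ℕ} (B : Matrix (Fin m) (Fin m) ℂ) (v : Fin n × Fin m → ℂ)
    (p : Fin n × Fin m) :
    ((1 : Matrix (Fin n) (Fin n) ℂ) ⊗ₖ B).mulVec v p = B.mulVec (fun j => v (p.1, j)) p.2 := by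
  rw [kron_mulVec]
  simp [Matrix.mulVec, dotProduct, Matrix.one_apply, mul_ite, ite_mul, eq_comm]

lemma kron_mulVec_eq {n m : ℕ} (A : Matrix (Fin n) (Fin n) ℂ) (B : Matrix (Fin m) (Fin m) ℂ)
    (v : Fin n × Fin m → ℂ) (p : Fin n × Fin m) :
    (A ⊗ₖ B).mulVec v p = A.mulVec (fun i => B.mulVec (fun j => v (i, j)) p.2) p.1 := by
  rw [kron_mulVec]
  simp only [Matrix.mulVec, dotProduct, Finset.mul_sum]
  refine Finset.sum_congr rfl fun i _ => Finset.sum_congr rfl fun j _ => by ring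

lemma mulVec_tensor {n m : ℕ} (A : Matrix (Fin n) (Fin n) ℂ) (B : Matrix (Fin m) (Fin m) ℂ)
    (a : Fin n → ℂ) (b : Fin m → ℂ) (p : Fin n × Fin m) :
    (A ⊗ₖ B).mulVec (fun q => a q.1 * b q.2) p = A.mulVec a p.1 * B.mulVec b p.2 := by
  rw [kron_mulVec]
  simp only [Matrix.mulVec, dotProduct, Finset.sum_mul_sum]
  refine Finset.sum_congr rfl fun i _ => Finset.sum_congr rfl fun j _ => by ring

lemma norm_sq_cols {n m : ℕ} (v : Fin n × Fin m → ℂ) :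
    ‖Ev v‖ ^ 2 = ∑ j, ‖Ev (fun i => v (i, j))‖ ^ 2 := by
  simp only [norm_sq_Ev]
  rw [Fintype.sum_prod_type_right]

lemma norm_sq_rows {n m : ℕ} (v : Fin n × Fin m → ℂ) :
    ‖Ev v‖ ^ 2 = ∑ i, ‖Ev (fun j => v (i, j))‖ ^ 2 := by
  simp only [norm_sq_Ev]
  rw [Fintype.sum_prod_type]

/-- `⟪v, Mw⟫ = ⟪Mv, w⟫` for Hermitian `M`. -/
lemma herm_inner {ι : Type*} [Fintype ι] [DecidableEq ι] {M : Matrix ι ι ℂ}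
    (hM : M.IsHermitian) (v w : ι → ℂ) :
    (inner ℂ (Ev v) (Ev (M.mulVec w)) : ℂ) = inner ℂ (Ev (M.mulVec v)) (Ev w) := by
  rw [inner_Ev, inner_Ev]
  simp only [Matrix.mulVec, dotProduct, star_sum, star_mul', Finset.mul_sum,
    Finset.sum_mul]
  rw [Finset.sum_comm]
  refine Finset.sum_congr rfl fun p _ => Finset.sum_congr rfl fun q _ => ?_
  have h1 : star (M p q) = M q p := by
    have h2 := congrFun (congrFun hM.eq q) p
    rwa [Matrix.conjTranspose_apply] at h2
  rw [h1]
  ring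

end SF

namespace SF

lemma opNorm_nonneg {k : ℕ} (M : Matrix (Fin k) (Fin k) ℂ) : 0 ≤ opNorm M := norm_nonneg _

lemma sq_norm_mulVec_le {k : ℕ} (M : Matrix (Fin k) (Fin k) ℂ) (v : Fin k → ℂ) :
    ‖Ev (M.mulVec v)‖ ^ 2 ≤ opNorm M ^ 2 * ‖Ev v‖ ^ 2 := by
  have h := mulVec_norm_le M v
  nlinarith [norm_nonneg (Ev (M.mulVec v)), norm_nonneg (Ev v), opNorm_nonneg M]

lemma kron_norm_le {n m : ℕ} (X : Matrix (Fin n) (Fin n) ℂ) (Y : Matrix (Fin m) (Fin m) ℂ)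
    (w : Fin n × Fin m → ℂ) :
    ‖Ev ((X ⊗ₖ Y).mulVec w)‖ ≤ opNorm X * opNorm Y * ‖Ev w‖ := by
  have hX0 : 0 ≤ opNorm X := opNorm_nonneg X
  have hY0 : 0 ≤ opNorm Y := opNorm_nonneg Y
  set z : Fin n × Fin m → ℂ := fun q => Y.mulVec (fun j => w (q.1, j)) q.2 with hz
  have hKz : Ev ((X ⊗ₖ Y).mulVec w) = Ev (fun p => X.mulVec (fun i => z (i, p.2)) p.1) := by
    ext p
    exact kron_mulVec_eq X Y w p
  have hzw : ‖Ev z‖ ^ 2 ≤ opNorm Y ^ 2 * ‖Ev w‖ ^ 2 := by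
    rw [norm_sq_rows z, norm_sq_rows w, Finset.mul_sum]
    refine Finset.sum_le_sum fun i _ => ?_
    exact sq_norm_mulVec_le Y (fun j => w (i, j))
  have hsq : ‖Ev ((X ⊗ₖ Y).mulVec w)‖ ^ 2 ≤ (opNorm X * opNorm Y * ‖Ev w‖) ^ 2 := by
    rw [hKz, norm_sq_cols]
    calc ∑ j, ‖Ev (fun i => (fun p : Fin n × Fin m => X.mulVec (fun i' => z (i', p.2)) p.1) (i, j))‖ ^ 2
        ≤ ∑ j, opNorm X ^ 2 * ‖Ev (fun i' => z (i', j))‖ ^ 2 := by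
          refine Finset.sum_le_sum fun j _ => ?_
          exact sq_norm_mulVec_le X (fun i' => z (i', j))
      _ = opNorm X ^ 2 * ‖Ev z‖ ^ 2 := by rw [← Finset.mul_sum, norm_sq_cols z]
      _ ≤ opNorm X ^ 2 * (opNorm Y ^ 2 * ‖Ev w‖ ^ 2) := by
          have : (0:ℝ) ≤ opNorm X ^ 2 := by positivity
          nlinarith
      _ = (opNorm X * opNorm Y * ‖Ev w‖) ^ 2 := by ring
  have h2 := Real.sqrt_le_sqrt hsq
  rwa [Real.sqrt_sq (norm_nonneg _), Real.sqrt_sq (by positivity)] at h2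

end SF

namespace SF

lemma star_mul_self_eq (z : ℂ) : star z * z = ((‖z‖ ^ 2 : ℝ) : ℂ) := by
  rw [Complex.star_def, mul_comm, Complex.mul_conj]
  norm_cast
  rw [← Complex.sq_norm]

lemma sum_star_self {k : ℕ} (a : Fin k → ℂ) :
    ∑ i, star (a i) * a i = ((‖Ev a‖ ^ 2 : ℝ) : ℂ) := by
  rw [norm_sq_Ev]
  push_cast
  refine Finset.sum_congr rfl fun i _ => ?_
  rw [star_mul_self_eq (a i)]
  push_cast
  ring

lemma tensor_norm_sq {n m : ℕ} (a : Fin n → ℂ) (b : Fin m → ℂ) :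
    ‖Ev (fun p : Fin n × Fin m => a p.1 * b p.2)‖ ^ 2 = ‖Ev a‖ ^ 2 * ‖Ev b‖ ^ 2 := by
  simp only [norm_sq_Ev]
  rw [Fintype.sum_prod_type, Finset.sum_mul_sum]
  refine Finset.sum_congr rfl fun i _ => Finset.sum_congr rfl fun j _ => ?_
  rw [norm_mul, mul_pow]

lemma inner_tensor {n m : ℕ} (a c : Fin n → ℂ) (b d : Fin m → ℂ) :
    (inner ℂ (Ev (fun p : Fin n × Fin m => a p.1 * b p.2))
        (Ev (fun p : Fin n × Fin m => c p.1 * d p.2)) : ℂ)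
      = (inner ℂ (Ev a) (Ev c) : ℂ) * (inner ℂ (Ev b) (Ev d) : ℂ) := by
  simp only [inner_Ev]
  rw [Fintype.sum_prod_type, Finset.sum_mul_sum]
  refine Finset.sum_congr rfl fun i _ => Finset.sum_congr rfl fun j _ => ?_
  rw [star_mul']
  ring

lemma inner_tensor_left {n m : ℕ} (a : Fin n → ℂ) (χ : Fin m → ℂ)
    (w : Fin n × Fin m → ℂ) :
    (inner ℂ (Ev (fun p : Fin n × Fin m => a p.1 * χ p.2)) (Ev w) : ℂ)
      = ∑ j, star (χ j) * (∑ i, star (a i) * w (i, j)) := by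
  rw [inner_Ev, Fintype.sum_prod_type_right]
  refine Finset.sum_congr rfl fun j _ => ?_
  rw [Finset.mul_sum]
  refine Finset.sum_congr rfl fun i _ => ?_
  rw [star_mul']
  ring

lemma inner_kron_one_right {n m : ℕ} (A : Matrix (Fin n) (Fin n) ℂ)
    (w : Fin n × Fin m → ℂ) :
    (inner ℂ (Ev w) (Ev ((A ⊗ₖ (1 : Matrix (Fin m) (Fin m) ℂ)).mulVec w)) : ℂ)
      = ∑ j, (inner ℂ (Ev (fun i => w (i, j))) (Ev (A.mulVec (fun i => w (i, j)))) : ℂ) := by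
  rw [inner_Ev, Fintype.sum_prod_type_right]
  refine Finset.sum_congr rfl fun j _ => ?_
  rw [inner_Ev]
  refine Finset.sum_congr rfl fun i _ => ?_
  rw [kron_one_right]

lemma inner_kron_one_left {n m : ℕ} (B : Matrix (Fin m) (Fin m) ℂ)
    (w : Fin n × Fin m → ℂ) :
    (inner ℂ (Ev w) (Ev (((1 : Matrix (Fin n) (Fin n) ℂ) ⊗ₖ B).mulVec w)) : ℂ)
      = ∑ i, (inner ℂ (Ev (fun j => w (i, j))) (Ev (B.mulVec (fun j => w (i, j)))) : ℂ) := by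
  rw [inner_Ev, Fintype.sum_prod_type]
  refine Finset.sum_congr rfl fun i _ => ?_
  rw [inner_Ev]
  refine Finset.sum_congr rfl fun j _ => ?_
  rw [kron_one_left]

end SF

namespace SF

lemma H_tensor {n m : ℕ} {HC X : Matrix (Fin n) (Fin n) ℂ} {HR Y : Matrix (Fin m) (Fin m) ℂ}
    {β lamC : ℝ} {H : Matrix (Fin n × Fin m) (Fin n × Fin m) ℂ}
    (hH : H = HC ⊗ₖ (1 : Matrix (Fin m) (Fin m) ℂ)
        + (1 : Matrix (Fin n) (Fin n) ℂ) ⊗ₖ HR + β • (X ⊗ₖ Y))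
    {gC : Fin n → ℂ} (heig : HC.mulVec gC = (lamC : ℂ) • gC) (hX : X.mulVec gC = 0)
    (φ : Fin m → ℂ) :
    H.mulVec (fun p => gC p.1 * φ p.2)
      = fun p => gC p.1 * ((lamC : ℂ) * φ p.2 + HR.mulVec φ p.2) := by
  funext p
  rw [hH, Matrix.add_mulVec, Matrix.add_mulVec, Matrix.smul_mulVec]
  simp only [Pi.add_apply, Pi.smul_apply]
  have h1 : (HC ⊗ₖ (1 : Matrix (Fin m) (Fin m) ℂ)).mulVec (fun q => gC q.1 * φ q.2) p
      = HC.mulVec gC p.1 * (1 : Matrix (Fin m) (Fin m) ℂ).mulVec φ p.2 :=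
    mulVec_tensor HC 1 gC φ p
  have h2 : ((1 : Matrix (Fin n) (Fin n) ℂ) ⊗ₖ HR).mulVec (fun q => gC q.1 * φ q.2) p
      = (1 : Matrix (Fin n) (Fin n) ℂ).mulVec gC p.1 * HR.mulVec φ p.2 :=
    mulVec_tensor 1 HR gC φ p
  have h3 : (X ⊗ₖ Y).mulVec (fun q => gC q.1 * φ q.2) p
      = X.mulVec gC p.1 * Y.mulVec φ p.2 :=
    mulVec_tensor X Y gC φ p
  rw [h1, h2, h3, hX, Matrix.one_mulVec, Matrix.one_mulVec, heig]
  simp only [Pi.zero_apply, mul_zero, smul_zero, Pi.smul_apply, smul_eq_mul, zero_mul]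
  ring

end SF


open SF in
set_option maxHeartbeats 2000000 in
/-- Core variational argument with a single frustrating term: if `H_C` has a simple
ground state `gC` (energy `lamC`, gap `Δ`), `X gC = 0`, and `β ‖X‖ ‖Y‖ < Δ`, then the
ground states of `H = H_C ⊗ 1 + 1 ⊗ H_R + β X ⊗ Y` are exactly `gC ⊗ ψ` with `ψ` a
ground state of `H_R`, and the ground energy is `lamC + min spec H_R`. -/
theorem single_frustration_superstable_ground_state
    {n m : ℕ} (HC X : Matrix (Fin n) (Fin n) ℂ) (HR Y : Matrix (Fin m) (Fin m) ℂ)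
    (β lamC Δ lamR : ℝ) (hβ : 0 ≤ β)
    (H : Matrix (Fin n × Fin m) (Fin n × Fin m) ℂ)
    (hH : H = HC ⊗ₖ (1 : Matrix (Fin m) (Fin m) ℂ)
        + (1 : Matrix (Fin n) (Fin n) ℂ) ⊗ₖ HR + β • (X ⊗ₖ Y))
    (hHerm : H.IsHermitian) (hHCherm : HC.IsHermitian) (hHRherm : HR.IsHermitian)
    (gC : Fin n → ℂ) (hgC : gC ≠ 0) (heig : HC.mulVec gC = (lamC : ℂ) • gC)
    (hΔ : 0 < Δ)
    (hgap : ∀ (v : Fin n → ℂ) (μ : ℝ), v ≠ 0 → HC.mulVec v = (μ : ℂ) • v →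
      μ = lamC ∨ lamC + Δ ≤ μ)
    (hsimple : ∀ v : Fin n → ℂ, HC.mulVec v = (lamC : ℂ) • v → ∃ c : ℂ, v = c • gC)
    (hX : X.mulVec gC = 0)
    (hlamR : IsLeast {μ : ℝ | ∃ ψ : Fin m → ℂ, ψ ≠ 0 ∧ HR.mulVec ψ = (μ : ℂ) • ψ} lamR)
    (hsmall : β * opNorm X * opNorm Y < Δ) :
    (∀ (E : ℝ) (v : Fin n × Fin m → ℂ), v ≠ 0 → H.mulVec v = (E : ℂ) • v →
        (∀ (E' : ℝ) (w : Fin n × Fin m → ℂ), w ≠ 0 → H.mulVec w = (E' : ℂ) • w → E ≤ E') →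
        ∃ ψ : Fin m → ℂ, (v = fun p => gC p.1 * ψ p.2) ∧ HR.mulVec ψ = (lamR : ℂ) • ψ) ∧
    IsLeast {E : ℝ | ∃ v : Fin n × Fin m → ℂ, v ≠ 0 ∧ H.mulVec v = (E : ℂ) • v}
      (lamC + lamR) := by
  obtain ⟨⟨ψ0, hψ0ne, hψ0eig⟩, hlb⟩ := hlamR
  -- the explicit ground state
  have hv0eig : H.mulVec (fun p => gC p.1 * ψ0 p.2)
      = ((lamC + lamR : ℝ) : ℂ) • (fun p => gC p.1 * ψ0 p.2) := by
    rw [H_tensor hH heig hX ψ0]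
    funext p
    rw [hψ0eig]
    simp only [Pi.smul_apply, smul_eq_mul]
    push_cast
    ring
  have hv0ne : (fun p : Fin n × Fin m => gC p.1 * ψ0 p.2) ≠ 0 := by
    obtain ⟨i0, hi0⟩ := Function.ne_iff.mp hgC
    obtain ⟨j0, hj0⟩ := Function.ne_iff.mp hψ0ne
    intro h0
    have := congrFun h0 (i0, j0)
    simp only [Pi.zero_apply, mul_eq_zero] at this
    tauto
  -- the key variational estimate
  have key : ∀ (E : ℝ) (v : Fin n × Fin m → ℂ), v ≠ 0 → H.mulVec v = (E : ℂ) • v →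
      lamC + lamR ≤ E ∧ (E ≤ lamC + lamR →
        ∃ ψ : Fin m → ℂ, (v = fun p => gC p.1 * ψ p.2) ∧ HR.mulVec ψ = (lamR : ℂ) • ψ) := by
    intro E v hvne heigv
    have hgCE : Ev gC ≠ 0 := fun h => hgC (funext fun i => congrFun (congrArg WithLp.ofLp h) i)
    have hng : (0:ℝ) < ‖Ev gC‖ ^ 2 := by
      have : 0 < ‖Ev gC‖ := norm_pos_iff.mpr hgCE
      positivity
    set ng : ℝ := ‖Ev gC‖ ^ 2 with hngdef
    have hngC : ((ng : ℝ) : ℂ) ≠ 0 := by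
      exact_mod_cast ne_of_gt hng
    obtain ⟨φ, hφdef⟩ : ∃ φ : Fin m → ℂ,
        φ = fun j => (∑ i, star (gC i) * v (i, j)) / ((ng : ℝ) : ℂ) := ⟨_, rfl⟩
    obtain ⟨u, hudef⟩ : ∃ u : Fin n × Fin m → ℂ, u = fun p => gC p.1 * φ p.2 := ⟨_, rfl⟩
    obtain ⟨w, hwdef⟩ : ∃ w : Fin n × Fin m → ℂ, w = fun p => v p - u p := ⟨_, rfl⟩
    have hsumg : ∑ i, star (gC i) * gC i = ((ng : ℝ) : ℂ) := sum_star_self gC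
    have horth : ∀ j, ∑ i, star (gC i) * w (i, j) = 0 := by
      intro j
      have hterm : ∀ i, star (gC i) * w (i, j)
          = star (gC i) * v (i, j) - (star (gC i) * gC i) * φ j := by
        intro i
        rw [hwdef, hudef]
        ring
      rw [Finset.sum_congr rfl fun i _ => hterm i, Finset.sum_sub_distrib, ← Finset.sum_mul,
        hsumg, hφdef]
      field_simp
      ring
    have hvuw : v = fun p => u p + w p := by
      funext p
      rw [hwdef]
      ring
    have hHu : H.mulVec u = fun p => gC p.1 * ((lamC : ℂ) * φ p.2 + HR.mulVec φ p.2) := by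
      rw [hudef]
      exact H_tensor hH heig hX φ
    obtain ⟨χ, hχdef⟩ : ∃ χ : Fin m → ℂ,
        χ = fun j => (lamC : ℂ) * φ j + HR.mulVec φ j := ⟨_, rfl⟩
    have hHu' : H.mulVec u = fun p => gC p.1 * χ p.2 := by rw [hHu, hχdef]
    have hoL : ∀ ξ : Fin m → ℂ,
        (inner ℂ (Ev (fun p : Fin n × Fin m => gC p.1 * ξ p.2)) (Ev w) : ℂ) = 0 := by
      intro ξ
      rw [inner_tensor_left]
      refine Finset.sum_eq_zero fun j _ => ?_
      rw [horth j, mul_zero]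
    have huw : (inner ℂ (Ev u) (Ev w) : ℂ) = 0 := by
      rw [hudef]; exact hoL φ
    have hwu : (inner ℂ (Ev w) (Ev u) : ℂ) = 0 := by
      rw [← inner_conj_symm, huw, map_zero]
    have hEvadd : Ev v = Ev u + Ev w := by
      rw [hvuw]; rfl
    have hNv : ‖Ev v‖ ^ 2 = ‖Ev u‖ ^ 2 + ‖Ev w‖ ^ 2 := by
      rw [hEvadd, norm_add_sq (𝕜 := ℂ), huw]
      simp
    have hHvsplit : H.mulVec v = H.mulVec u + H.mulVec w := by
      rw [hvuw]
      have : (fun p => u p + w p) = u + w := rfl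
      rw [this, Matrix.mulVec_add]
    have hEinner : ∀ a : Fin n × Fin m → ℂ,
        (inner ℂ (Ev a) (Ev (H.mulVec v)) : ℂ) = (E : ℂ) * inner ℂ (Ev a) (Ev v) := by
      intro a
      rw [heigv]
      have : Ev ((E:ℂ) • v) = (E:ℂ) • Ev v := rfl
      rw [this, inner_smul_right]
    -- energy identity on w
    have hwHw : (inner ℂ (Ev w) (Ev (H.mulVec w)) : ℂ) = (E : ℂ) * ((‖Ev w‖ ^ 2 : ℝ) : ℂ) := by
      have h1 : (inner ℂ (Ev w) (Ev (H.mulVec v)) : ℂ)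
          = inner ℂ (Ev w) (Ev (H.mulVec u)) + inner ℂ (Ev w) (Ev (H.mulVec w)) := by
        rw [hHvsplit]
        have : Ev (H.mulVec u + H.mulVec w) = Ev (H.mulVec u) + Ev (H.mulVec w) := rfl
        rw [this, inner_add_right]
      have h2 : (inner ℂ (Ev w) (Ev (H.mulVec u)) : ℂ) = 0 := by
        rw [hHu', ← inner_conj_symm, hoL χ, map_zero]
      have h3 : (inner ℂ (Ev w) (Ev v) : ℂ) = ((‖Ev w‖ ^ 2 : ℝ) : ℂ) := by
        rw [hEvadd, inner_add_right, hwu, zero_add, inner_self_eq_norm_sq_to_K]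
        norm_cast
      have h4 := hEinner w
      rw [h1, h2, zero_add, h3] at h4
      exact h4
    -- energy identity on u
    have huHu : (inner ℂ (Ev u) (Ev (H.mulVec u)) : ℂ) = (E : ℂ) * ((‖Ev u‖ ^ 2 : ℝ) : ℂ) := by
      have h1 : (inner ℂ (Ev u) (Ev (H.mulVec v)) : ℂ)
          = inner ℂ (Ev u) (Ev (H.mulVec u)) + inner ℂ (Ev u) (Ev (H.mulVec w)) := by
        rw [hHvsplit]
        have : Ev (H.mulVec u + H.mulVec w) = Ev (H.mulVec u) + Ev (H.mulVec w) := rfl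
        rw [this, inner_add_right]
      have h2 : (inner ℂ (Ev u) (Ev (H.mulVec w)) : ℂ) = 0 := by
        rw [herm_inner hHerm, hHu', hoL χ]
      have h3 : (inner ℂ (Ev u) (Ev v) : ℂ) = ((‖Ev u‖ ^ 2 : ℝ) : ℂ) := by
        rw [hEvadd, inner_add_right, huw, add_zero, inner_self_eq_norm_sq_to_K]
        norm_cast
      have h4 := hEinner u
      rw [h1, h2, add_zero, h3] at h4
      exact h4
    have hre3 : ∀ (r : ℝ) (z : ℂ), ((r : ℂ) * z).re = r * z.re := fun r z => by
      simp [Complex.mul_re]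
    -- quadratic lower bound on u
    have huHu_ge : (lamC + lamR) * ‖Ev u‖ ^ 2 ≤ (inner ℂ (Ev u) (Ev (H.mulVec u)) : ℂ).re := by
      rw [hHu', hudef, inner_tensor gC gC φ χ]
      have hgg : (inner ℂ (Ev gC) (Ev gC) : ℂ) = ((ng : ℝ) : ℂ) := by
        rw [inner_Ev]; exact hsumg
      have hEχ : Ev χ = (lamC : ℂ) • Ev φ + Ev (HR.mulVec φ) := by
        rw [hχdef]; rfl
      have hφχ : (inner ℂ (Ev φ) (Ev χ) : ℂ)
          = (lamC : ℂ) * ((‖Ev φ‖ : ℝ) : ℂ) ^ 2 + inner ℂ (Ev φ) (Ev (HR.mulVec φ)) := by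
        rw [hEχ, inner_add_right, inner_smul_right, inner_self_eq_norm_sq_to_K]
        rfl
      rw [hgg, hφχ, hre3, Complex.add_re, hre3, ← Complex.ofReal_pow, Complex.ofReal_re]
      have hquad := quadR hHRherm (fun μ hμ => hlb hμ) φ
      have hNu2 : ‖Ev (fun p : Fin n × Fin m => gC p.1 * φ p.2)‖ ^ 2 = ng * ‖Ev φ‖ ^ 2 :=
        tensor_norm_sq gC φ
      rw [hNu2]
      nlinarith [hng, sq_nonneg ‖Ev φ‖, mul_le_mul_of_nonneg_left hquad hng.le]
    -- splitting of H on w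
    have hwsplit : Ev (H.mulVec w)
        = Ev ((HC ⊗ₖ (1 : Matrix (Fin m) (Fin m) ℂ)).mulVec w)
        + Ev (((1 : Matrix (Fin n) (Fin n) ℂ) ⊗ₖ HR).mulVec w)
        + ((β : ℝ) : ℂ) • Ev ((X ⊗ₖ Y).mulVec w) := by
      have h5 : H.mulVec w = (HC ⊗ₖ (1 : Matrix (Fin m) (Fin m) ℂ)).mulVec w
          + ((1 : Matrix (Fin n) (Fin n) ℂ) ⊗ₖ HR).mulVec w
          + β • (X ⊗ₖ Y).mulVec w := by
        rw [hH, Matrix.add_mulVec, Matrix.add_mulVec, Matrix.smul_mulVec]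
      ext p
      show H.mulVec w p = _
      rw [h5]
      simp only [Pi.add_apply, Pi.smul_apply, PiLp.add_apply, PiLp.smul_apply, smul_eq_mul]
      rw [Complex.real_smul]
      rfl
    have hterm1 : (lamC + Δ) * ‖Ev w‖ ^ 2
        ≤ (inner ℂ (Ev w) (Ev ((HC ⊗ₖ (1 : Matrix (Fin m) (Fin m) ℂ)).mulVec w)) : ℂ).re := by
      rw [inner_kron_one_right, Complex.re_sum, norm_sq_cols w, Finset.mul_sum]
      exact Finset.sum_le_sum fun j _ =>
        quadC hHCherm hgap hsimple (fun i => w (i, j)) (horth j)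
    have hterm2 : lamR * ‖Ev w‖ ^ 2
        ≤ (inner ℂ (Ev w) (Ev (((1 : Matrix (Fin n) (Fin n) ℂ) ⊗ₖ HR).mulVec w)) : ℂ).re := by
      rw [inner_kron_one_left, Complex.re_sum, norm_sq_rows w, Finset.mul_sum]
      exact Finset.sum_le_sum fun i _ =>
        quadR hHRherm (fun μ hμ => hlb hμ) (fun j => w (i, j))
    have hterm3 : -(β * opNorm X * opNorm Y * ‖Ev w‖ ^ 2)
        ≤ (((β : ℝ) : ℂ) * inner ℂ (Ev w) (Ev ((X ⊗ₖ Y).mulVec w))).re := by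
      set z : ℂ := inner ℂ (Ev w) (Ev ((X ⊗ₖ Y).mulVec w)) with hzdef
      have hcs : ‖z‖ ≤ opNorm X * opNorm Y * ‖Ev w‖ ^ 2 := by
        calc ‖z‖ ≤ ‖Ev w‖ * ‖Ev ((X ⊗ₖ Y).mulVec w)‖ := norm_inner_le_norm _ _
          _ ≤ ‖Ev w‖ * (opNorm X * opNorm Y * ‖Ev w‖) :=
              mul_le_mul_of_nonneg_left (kron_norm_le X Y w) (norm_nonneg _)
          _ = opNorm X * opNorm Y * ‖Ev w‖ ^ 2 := by ring
      have h5 : |z.re| ≤ ‖z‖ := by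
        exact Complex.abs_re_le_norm z
      have hrez : -(opNorm X * opNorm Y * ‖Ev w‖ ^ 2) ≤ z.re := by
        have h6 := (abs_le.mp h5).1
        linarith
      rw [hre3]
      nlinarith [mul_le_mul_of_nonneg_left hrez hβ]
    have hwbound : (lamC + Δ + lamR - β * opNorm X * opNorm Y) * ‖Ev w‖ ^ 2
        ≤ E * ‖Ev w‖ ^ 2 := by
      have hsum : (inner ℂ (Ev w) (Ev (H.mulVec w)) : ℂ).re
          = (inner ℂ (Ev w) (Ev ((HC ⊗ₖ (1 : Matrix (Fin m) (Fin m) ℂ)).mulVec w)) : ℂ).re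
          + (inner ℂ (Ev w) (Ev (((1 : Matrix (Fin n) (Fin n) ℂ) ⊗ₖ HR).mulVec w)) : ℂ).re
          + (((β : ℝ) : ℂ) * inner ℂ (Ev w) (Ev ((X ⊗ₖ Y).mulVec w))).re := by
        rw [hwsplit, inner_add_right, inner_add_right, inner_smul_right, Complex.add_re,
          Complex.add_re]
      have hEeq : (inner ℂ (Ev w) (Ev (H.mulVec w)) : ℂ).re = E * ‖Ev w‖ ^ 2 := by
        rw [hwHw, hre3, Complex.ofReal_re]
      rw [hEeq] at hsum
      linarith [hterm1, hterm2, hterm3]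
    have hubound : (lamC + lamR) * ‖Ev u‖ ^ 2 ≤ E * ‖Ev u‖ ^ 2 := by
      have hEeq : (inner ℂ (Ev u) (Ev (H.mulVec u)) : ℂ).re = E * ‖Ev u‖ ^ 2 := by
        rw [huHu, hre3, Complex.ofReal_re]
      linarith [huHu_ge]
    have hδ : 0 < Δ - β * opNorm X * opNorm Y := by linarith
    have hNw0 : (0:ℝ) ≤ ‖Ev w‖ ^ 2 := sq_nonneg _
    have hNu0 : (0:ℝ) ≤ ‖Ev u‖ ^ 2 := sq_nonneg _
    have hNvpos : 0 < ‖Ev v‖ ^ 2 := by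
      have hvE : Ev v ≠ 0 := fun h => hvne (funext fun p => congrFun (congrArg WithLp.ofLp h) p)
      have h6 : 0 < ‖Ev v‖ := norm_pos_iff.mpr hvE
      positivity
    have hlower : lamC + lamR ≤ E := by
      nlinarith [hwbound, hubound, hNv, hδ, hNw0, hNu0, hNvpos,
        mul_nonneg (le_of_lt hδ) hNw0]
    refine ⟨hlower, fun hEle => ?_⟩
    have hE' : E = lamC + lamR := le_antisymm hEle hlower
    have hNwzero : ‖Ev w‖ ^ 2 = 0 := by nlinarith [hwbound, hδ, hNw0]
    have hwz : w = 0 := by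
      have h7 : Ev w = 0 := by
        have h8 : ‖Ev w‖ = 0 := by
          have := pow_eq_zero_iff (n := 2) (by norm_num) |>.mp hNwzero
          exact this
        exact norm_eq_zero.mp h8
      funext p
      exact congrFun (congrArg WithLp.ofLp h7) p
    have hvu : v = fun p => gC p.1 * φ p.2 := by
      funext p
      have h8 := congrFun hvuw p
      have h9 : w p = 0 := by rw [hwz]; rfl
      rw [h8, h9, add_zero, hudef]
    have hφne : φ ≠ 0 := by
      intro h0
      apply hvne
      rw [hvu, h0]
      funext p
      simp
    obtain ⟨i0, hi0⟩ := Function.ne_iff.mp hgC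
    have hvequ : v = u := by rw [hvu, hudef]
    have h10 : (fun p : Fin n × Fin m => gC p.1 * χ p.2) = (E : ℂ) • v := by
      rw [← hHu', ← hvequ]
      exact heigv
    have hχE : ∀ j, χ j = (E : ℂ) * φ j := by
      intro j
      have h11 := congrFun h10 (i0, j)
      simp only [Pi.smul_apply, smul_eq_mul] at h11
      have h12 := congrFun hvu (i0, j)
      rw [h12] at h11
      apply mul_left_cancel₀ hi0
      rw [h11]
      ring
    have hHRφ : HR.mulVec φ = (lamR : ℂ) • φ := by
      funext j
      have h13 : (lamC : ℂ) * φ j + HR.mulVec φ j = (E : ℂ) * φ j := by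
        have h14 := hχE j
        rw [hχdef] at h14
        exact h14
      have h15 : HR.mulVec φ j = ((E : ℂ) - (lamC : ℂ)) * φ j := by
        linear_combination h13
      simp only [Pi.smul_apply, smul_eq_mul]
      rw [h15, hE']
      push_cast
      ring
    exact ⟨φ, hvu, hHRφ⟩
  refine ⟨?_, ⟨⟨_, hv0ne, hv0eig⟩, ?_⟩⟩
  · intro E v hvne heigv hmin
    exact (key E v hvne heigv).2 (hmin _ _ hv0ne hv0eig)
  · rintro E ⟨v, hvne, heigv⟩
    exact (key E v hvne heigv).1
end

section
/- Let H = H_C + H_R + ∑_{i=1}^{k} ∑_{q=1}^{Q_i} β^i X_{i,q} Y_{i,q} on ℋ_C ⊗ ℋ_R, with β ∈ (0,1), H_C having simple ground state |0⟩_C of energy λ_C and gap Δ_C > 0, X_{i,q}|0⟩_C = 0 for all i,q, and H_R acting on ℋ_R. Set Q̄ := max_i Q_i, X̄ := max_{i,q}‖X_{i,q}‖, Ȳ := max_{i,q}‖Y_{i,q}‖. If β·(1-β^k)/(1-β)·Q̄·X̄·Ȳ < Δ_C, then the ground state energy of H is λ_C + min spec(H_R) and every ground state is of the form |0⟩_C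 ⊗ |ψ⟩ with H_R|ψ⟩ = min spec(H_R)·|ψ⟩. -/
open Kronecker

open Matrix

set_option synthInstance.maxHeartbeats 1000000
set_option maxHeartbeats 4000000
set_option linter.unusedSectionVars false
set_option linter.unusedVariables false

namespace SGS

open Matrix

variable {ι : Type*} [Fintype ι] [DecidableEq ι]

/-- squared ℓ² norm of a vector -/
def nsq (v : ι → ℂ) : ℝ := ∑ i, Complex.normSq (v i)

lemma nsq_nonneg (v : ι → ℂ) : 0 ≤ nsq v :=
  Finset.sum_nonneg fun i _ => Complex.normSq_nonneg _

lemma nsq_eq_zero_iff {v : ι → ℂ} : nsq v = 0 ↔ v = 0 := by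
  constructor
  · intro h
    funext i
    have := (Finset.sum_eq_zero_iff_of_nonneg (fun i _ => Complex.normSq_nonneg (v i))).1 h i
      (Finset.mem_univ i)
    simpa using Complex.normSq_eq_zero.1 this
  · rintro rfl; simp [nsq]

noncomputable def toE (v : ι → ℂ) : EuclideanSpace ℂ ι := (WithLp.equiv 2 _).symm v

lemma norm_toE (v : ι → ℂ) : ‖toE v‖ = Real.sqrt (nsq v) := by
  rw [EuclideanSpace.norm_eq]
  congr 1
  unfold nsq
  refine Finset.sum_congr rfl fun i _ => ?_
  rw [Complex.normSq_eq_norm_sq]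
  rfl

lemma nsq_eq_norm_sq (v : ι → ℂ) : nsq v = ‖toE v‖ ^ 2 := by
  rw [norm_toE, Real.sq_sqrt (nsq_nonneg v)]

lemma inner_toE (x y : ι → ℂ) : (inner ℂ (toE x) (toE y) : ℂ) = star x ⬝ᵥ y := by
  rw [PiLp.inner_apply]
  refine Finset.sum_congr rfl fun i _ => ?_
  simp [toE, dotProduct, mul_comm]

lemma dot_self (v : ι → ℂ) : star v ⬝ᵥ v = ((nsq v : ℝ) : ℂ) := by
  unfold dotProduct nsq
  push_cast
  refine Finset.sum_congr rfl fun i _ => ?_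
  simp [Complex.normSq_eq_conj_mul_self]

lemma cauchy_schwarz (x y : ι → ℂ) :
    ‖star x ⬝ᵥ y‖ ≤ Real.sqrt (nsq x) * Real.sqrt (nsq y) := by
  have := norm_inner_le_norm (𝕜 := ℂ) (toE x) (toE y)
  rwa [inner_toE, norm_toE, norm_toE] at this

lemma conj_dot (x y : ι → ℂ) : (starRingEnd ℂ) (star x ⬝ᵥ y) = star y ⬝ᵥ x := by
  unfold dotProduct
  rw [map_sum]
  refine Finset.sum_congr rfl fun i _ => ?_
  simp [mul_comm]

lemma toECLM {N : ℕ} (A : Matrix (Fin N) (Fin N) ℂ) (x : Fin N → ℂ) :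
    Matrix.toEuclideanCLM (𝕜 := ℂ) A (toE x) = toE (A *ᵥ x) := by
  have h := Matrix.ofLp_toEuclideanCLM (𝕜 := ℂ) A (toE x)
  apply (WithLp.equiv 2 _).injective
  exact h

lemma opNorm_nonneg {N : ℕ} (A : Matrix (Fin N) (Fin N) ℂ) : 0 ≤ opNorm A := norm_nonneg _

open scoped Matrix.Norms.L2Operator in
lemma opNorm_conjTranspose {N : ℕ} (A : Matrix (Fin N) (Fin N) ℂ) : opNorm Aᴴ = opNorm A := by
  have h1 : opNorm A = ‖A‖ := (Matrix.cstar_norm_def A).symm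
  have h2 : opNorm Aᴴ = ‖Aᴴ‖ := (Matrix.cstar_norm_def Aᴴ).symm
  rw [h1, h2, Matrix.l2_opNorm_conjTranspose]

lemma norm_mulVec_le {N : ℕ} (A : Matrix (Fin N) (Fin N) ℂ) (x : Fin N → ℂ) :
    ‖toE (A *ᵥ x)‖ ≤ opNorm A * ‖toE x‖ := by
  rw [← toECLM]
  exact (Matrix.toEuclideanCLM (𝕜 := ℂ) A).le_opNorm _

lemma toE_coe {N : ℕ} (b : EuclideanSpace ℂ (Fin N)) : toE ⇑b = b := rfl

lemma quad_expand {N : ℕ} {A : Matrix (Fin N) (Fin N) ℂ} (hA : A.IsHermitian) (w : Fin N → ℂ) :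
    star w ⬝ᵥ w
      = ((∑ j, Complex.normSq (star ⇑(hA.eigenvectorBasis j) ⬝ᵥ w) : ℝ) : ℂ) ∧
    star w ⬝ᵥ (A *ᵥ w)
      = ((∑ j, hA.eigenvalues j *
            Complex.normSq (star ⇑(hA.eigenvectorBasis j) ⬝ᵥ w) : ℝ) : ℂ) := by
  set b := hA.eigenvectorBasis with hb
  set c : Fin N → ℂ := fun j => star ⇑(b j) ⬝ᵥ w with hc
  have hrepr : toE w = ∑ j, c j • b j := by
    have := b.sum_repr (toE w)
    rw [← this]
    refine Finset.sum_congr rfl fun j _ => ?_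
    rw [b.repr_apply_apply]
    congr 1
    exact inner_toE (b j) w
  have hwb : ∀ j, (inner ℂ (toE w) (b j : EuclideanSpace ℂ (Fin N)) : ℂ)
      = (starRingEnd ℂ) (c j) := by
    intro j
    rw [← inner_conj_symm, ← toE_coe (b j), inner_toE]
  constructor
  · rw [← inner_toE w w]
    nth_rewrite 2 [hrepr]
    rw [inner_sum]
    push_cast
    refine Finset.sum_congr rfl fun j _ => ?_
    rw [inner_smul_right, hwb j, Complex.normSq_eq_conj_mul_self]
    ring
  · rw [← inner_toE w (A *ᵥ w), ← toECLM]
    nth_rewrite 2 [hrepr]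
    rw [map_sum, inner_sum]
    push_cast
    refine Finset.sum_congr rfl fun j _ => ?_
    rw [_root_.map_smul, ← toE_coe (b j), toECLM, hA.mulVec_eigenvectorBasis,
      inner_smul_right]
    have : toE (hA.eigenvalues j • ⇑(b j))
        = (hA.eigenvalues j : ℂ) • (b j : EuclideanSpace ℂ (Fin N)) := by
      rw [← toE_coe (b j)]
      rfl
    rw [this, inner_smul_right, hwb j, Complex.normSq_eq_conj_mul_self]
    simp only [toE, Equiv.apply_symm_apply]
    change c j * (_ * _) = _ * ((starRingEnd ℂ) (c j) * c j)
    ring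

lemma real_smul_eq (r : ℝ) (v : ι → ℂ) : r • v = (r : ℂ) • v := by
  funext i
  simp [Complex.real_smul]

lemma eigenvectorBasis_ne_zero {N : ℕ} {A : Matrix (Fin N) (Fin N) ℂ} (hA : A.IsHermitian)
    (j : Fin N) : ⇑(hA.eigenvectorBasis j) ≠ 0 := by
  intro h
  have h1 : ‖hA.eigenvectorBasis j‖ = 1 := hA.eigenvectorBasis.orthonormal.1 j
  have h0 : (hA.eigenvectorBasis j : EuclideanSpace ℂ (Fin N)) = 0 := by
    ext i
    exact congrFun h i
  rw [h0, norm_zero] at h1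
  norm_num at h1

lemma herm_quad_ground {N : ℕ} {A : Matrix (Fin N) (Fin N) ℂ} (hA : A.IsHermitian) {lam : ℝ}
    (hlb : ∀ (v : Fin N → ℂ) (μ : ℝ), v ≠ 0 → A *ᵥ v = (μ : ℂ) • v → lam ≤ μ)
    (w : Fin N → ℂ) : lam * nsq w ≤ (star w ⬝ᵥ (A *ᵥ w)).re := by
  obtain ⟨h1, h2⟩ := quad_expand hA w
  have hnsq : nsq w = ∑ j, Complex.normSq (star ⇑(hA.eigenvectorBasis j) ⬝ᵥ w) := by
    have := dot_self w
    rw [h1] at this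
    exact_mod_cast (Complex.ofReal_inj.1 this.symm)
  rw [h2, Complex.ofReal_re, hnsq, Finset.mul_sum]
  refine Finset.sum_le_sum fun j _ => ?_
  have heq : A *ᵥ ⇑(hA.eigenvectorBasis j)
      = ((hA.eigenvalues j : ℝ) : ℂ) • ⇑(hA.eigenvectorBasis j) := by
    rw [← real_smul_eq]
    exact hA.mulVec_eigenvectorBasis j
  exact mul_le_mul_of_nonneg_right
    (hlb _ _ (eigenvectorBasis_ne_zero hA j) heq) (Complex.normSq_nonneg _)

lemma herm_quad_gap {N : ℕ} {A : Matrix (Fin N) (Fin N) ℂ} (hA : A.IsHermitian)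
    {lam Δ : ℝ} {g : Fin N → ℂ} (hg : g ≠ 0) (heig : A *ᵥ g = (lam : ℂ) • g)
    (hgap : ∀ (v : Fin N → ℂ) (μ : ℝ), v ≠ 0 → A *ᵥ v = (μ : ℂ) • v → μ = lam ∨ lam + Δ ≤ μ)
    (hsimple : ∀ v : Fin N → ℂ, A *ᵥ v = (lam : ℂ) • v → ∃ c : ℂ, v = c • g)
    (w : Fin N → ℂ) (hw : star g ⬝ᵥ w = 0) :
    (lam + Δ) * nsq w ≤ (star w ⬝ᵥ (A *ᵥ w)).re := by
  obtain ⟨h1, h2⟩ := quad_expand hA w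
  have hnsq : nsq w = ∑ j, Complex.normSq (star ⇑(hA.eigenvectorBasis j) ⬝ᵥ w) := by
    have := dot_self w
    rw [h1] at this
    exact_mod_cast (Complex.ofReal_inj.1 this.symm)
  rw [h2, Complex.ofReal_re, hnsq, Finset.mul_sum]
  refine Finset.sum_le_sum fun j _ => ?_
  have heq : A *ᵥ ⇑(hA.eigenvectorBasis j)
      = ((hA.eigenvalues j : ℝ) : ℂ) • ⇑(hA.eigenvectorBasis j) := by
    rw [← real_smul_eq]
    exact hA.mulVec_eigenvectorBasis j
  rcases hgap _ _ (eigenvectorBasis_ne_zero hA j) heq with hcase | hcase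
  · obtain ⟨c, hc⟩ := hsimple _ (by rw [heq, hcase])
    have hzero : star ⇑(hA.eigenvectorBasis j) ⬝ᵥ w = 0 := by
      rw [hc]
      simp only [star_smul, smul_dotProduct, hw, smul_zero]
    rw [hzero]
    simp
  · exact mul_le_mul_of_nonneg_right hcase (Complex.normSq_nonneg _)

variable {n m : ℕ}

lemma kron_conjT (A : Matrix (Fin n) (Fin n) ℂ) (B : Matrix (Fin m) (Fin m) ℂ) :
    (A ⊗ₖ B)ᴴ = Aᴴ ⊗ₖ Bᴴ := by
  ext ⟨i, j⟩ ⟨p, q⟩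
  simp [Matrix.conjTranspose_apply, Matrix.kroneckerMap_apply, mul_comm]

lemma kron_mulVec_pure (A : Matrix (Fin n) (Fin n) ℂ) (B : Matrix (Fin m) (Fin m) ℂ)
    (a : Fin n → ℂ) (b : Fin m → ℂ) :
    (A ⊗ₖ B) *ᵥ (fun p : Fin n × Fin m => a p.1 * b p.2)
      = fun p => (A *ᵥ a) p.1 * (B *ᵥ b) p.2 := by
  funext ⟨i, j⟩
  simp only [Matrix.mulVec, dotProduct, Fintype.sum_prod_type,
    Matrix.kroneckerMap_apply, Finset.sum_mul_sum]
  refine Finset.sum_congr rfl fun p _ => Finset.sum_congr rfl fun q _ => by ring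

lemma kronL_mulVec (A : Matrix (Fin n) (Fin n) ℂ) (v : Fin n × Fin m → ℂ) (i : Fin n)
    (j : Fin m) :
    ((A ⊗ₖ (1 : Matrix (Fin m) (Fin m) ℂ)) *ᵥ v) (i, j) = (A *ᵥ fun p => v (p, j)) i := by
  simp only [Matrix.mulVec, dotProduct, Fintype.sum_prod_type,
    Matrix.kroneckerMap_apply, Matrix.one_apply]
  refine Finset.sum_congr rfl fun p _ => ?_
  simp [Finset.sum_ite_eq', mul_ite]

lemma kronR_mulVec (B : Matrix (Fin m) (Fin m) ℂ) (v : Fin n × Fin m → ℂ) (i : Fin n)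
    (j : Fin m) :
    (((1 : Matrix (Fin n) (Fin n) ℂ) ⊗ₖ B) *ᵥ v) (i, j) = (B *ᵥ fun q => v (i, q)) j := by
  simp only [Matrix.mulVec, dotProduct, Fintype.sum_prod_type,
    Matrix.kroneckerMap_apply, Matrix.one_apply]
  rw [Finset.sum_eq_single i]
  · simp
  · intro p _ hp
    simp [Ne.symm hp]
  · simp

lemma nsq_prod_col (v : Fin n × Fin m → ℂ) : nsq v = ∑ j, nsq (fun p => v (p, j)) := by
  unfold nsq
  rw [Fintype.sum_prod_type, Finset.sum_comm]

lemma nsq_prod_row (v : Fin n × Fin m → ℂ) : nsq v = ∑ i, nsq (fun q => v (i, q)) := by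
  unfold nsq
  rw [Fintype.sum_prod_type]

lemma nsq_mulVec_le {N : ℕ} (A : Matrix (Fin N) (Fin N) ℂ) (x : Fin N → ℂ) :
    nsq (A *ᵥ x) ≤ opNorm A ^ 2 * nsq x := by
  rw [nsq_eq_norm_sq, nsq_eq_norm_sq, ← mul_pow]
  exact pow_le_pow_left₀ (norm_nonneg _) (norm_mulVec_le A x) 2

lemma nsq_kronL_le (A : Matrix (Fin n) (Fin n) ℂ) (v : Fin n × Fin m → ℂ) :
    nsq ((A ⊗ₖ (1 : Matrix (Fin m) (Fin m) ℂ)) *ᵥ v) ≤ opNorm A ^ 2 * nsq v := by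
  rw [nsq_prod_col, nsq_prod_col v, Finset.mul_sum]
  refine Finset.sum_le_sum fun j _ => ?_
  have : (fun p => ((A ⊗ₖ (1 : Matrix (Fin m) (Fin m) ℂ)) *ᵥ v) (p, j))
      = A *ᵥ (fun p => v (p, j)) := by
    funext p
    exact kronL_mulVec A v p j
  rw [this]
  exact nsq_mulVec_le A _

lemma nsq_kronR_le (B : Matrix (Fin m) (Fin m) ℂ) (v : Fin n × Fin m → ℂ) :
    nsq (((1 : Matrix (Fin n) (Fin n) ℂ) ⊗ₖ B) *ᵥ v) ≤ opNorm B ^ 2 * nsq v := by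
  rw [nsq_prod_row, nsq_prod_row v, Finset.mul_sum]
  refine Finset.sum_le_sum fun i _ => ?_
  have : (fun q => (((1 : Matrix (Fin n) (Fin n) ℂ) ⊗ₖ B) *ᵥ v) (i, q))
      = B *ᵥ (fun q => v (i, q)) := by
    funext q
    exact kronR_mulVec B v i q
  rw [this]
  exact nsq_mulVec_le B _

lemma kron_quad_bound (A : Matrix (Fin n) (Fin n) ℂ) (B : Matrix (Fin m) (Fin m) ℂ)
    (u : Fin n × Fin m → ℂ) :
    ‖star u ⬝ᵥ ((A ⊗ₖ B) *ᵥ u)‖ ≤ opNorm A * opNorm B * nsq u := by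
  have hsplit : A ⊗ₖ B = (A ⊗ₖ (1 : Matrix (Fin m) (Fin m) ℂ))
      * ((1 : Matrix (Fin n) (Fin n) ℂ) ⊗ₖ B) := by
    rw [← Matrix.mul_kronecker_mul, Matrix.mul_one, Matrix.one_mul]
  set a := (Aᴴ ⊗ₖ (1 : Matrix (Fin m) (Fin m) ℂ)) *ᵥ u with ha
  set b := ((1 : Matrix (Fin n) (Fin n) ℂ) ⊗ₖ B) *ᵥ u with hb
  have hdot : star u ⬝ᵥ ((A ⊗ₖ B) *ᵥ u) = star a ⬝ᵥ b := by
    rw [hsplit, ← Matrix.mulVec_mulVec, Matrix.dotProduct_mulVec]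
    congr 1
    rw [ha, Matrix.star_mulVec, kron_conjT]
    simp [Matrix.conjTranspose_conjTranspose]
  rw [hdot]
  calc ‖star a ⬝ᵥ b‖ ≤ Real.sqrt (nsq a) * Real.sqrt (nsq b) := cauchy_schwarz a b
    _ ≤ Real.sqrt (opNorm Aᴴ ^ 2 * nsq u) * Real.sqrt (opNorm B ^ 2 * nsq u) := by
        gcongr
        · exact nsq_kronL_le Aᴴ u
        · exact nsq_kronR_le B u
    _ = opNorm A * opNorm B * nsq u := by
        rw [Real.sqrt_mul (by positivity), Real.sqrt_mul (by positivity),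
          Real.sqrt_sq (opNorm_nonneg _), Real.sqrt_sq (opNorm_nonneg _),
          opNorm_conjTranspose]
        rw [mul_mul_mul_comm, Real.mul_self_sqrt (nsq_nonneg u)]

lemma sum_mulVec {α : Type*} {J : Type*} [Fintype J] (s : Finset α)
    (M : α → Matrix J J ℂ) (v : J → ℂ) :
    (∑ i ∈ s, M i) *ᵥ v = ∑ i ∈ s, (M i *ᵥ v) := by
  induction s using Finset.cons_induction with
  | empty => simp [Matrix.mulVec, dotProduct]
  | cons a s ha ih => rw [Finset.sum_cons, Finset.sum_cons, Matrix.add_mulVec, ih]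

lemma dot_sum {α : Type*} {J : Type*} [Fintype J] (s : Finset α)
    (v : J → ℂ) (w : α → J → ℂ) :
    v ⬝ᵥ (∑ i ∈ s, w i) = ∑ i ∈ s, v ⬝ᵥ w i := by
  induction s using Finset.cons_induction with
  | empty => simp
  | cons a s ha ih => rw [Finset.sum_cons, Finset.sum_cons, dotProduct_add, ih]

lemma col_bound {N : ℕ} {A : Matrix (Fin N) (Fin N) ℂ} (hA : A.IsHermitian)
    {lam Δ : ℝ} {g : Fin N → ℂ} (hg2 : (0 : ℝ) < nsq g)
    (heig : A *ᵥ g = (lam : ℂ) • g)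
    (hgap : ∀ (v : Fin N → ℂ) (μ : ℝ), v ≠ 0 → A *ᵥ v = (μ : ℂ) • v → μ = lam ∨ lam + Δ ≤ μ)
    (hsimple : ∀ v : Fin N → ℂ, A *ᵥ v = (lam : ℂ) • v → ∃ c : ℂ, v = c • g)
    (x : Fin N → ℂ) :
    lam * nsq x + Δ * nsq (fun p => x p - g p * ((star g ⬝ᵥ x) / ((nsq g : ℝ) : ℂ)))
      ≤ (star x ⬝ᵥ (A *ᵥ x)).re := by
  have hg : g ≠ 0 := fun h => by
    rw [← nsq_eq_zero_iff (v := g)] at h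
    exact absurd h (ne_of_gt hg2)
  have hg2ne : ((nsq g : ℝ) : ℂ) ≠ 0 := by
    exact_mod_cast ne_of_gt hg2
  set t : ℂ := (star g ⬝ᵥ x) / ((nsq g : ℝ) : ℂ) with ht
  set y : Fin N → ℂ := fun p => x p - g p * t with hy
  have hx : x = y + t • g := by
    funext p
    simp only [hy, Pi.add_apply, Pi.smul_apply, smul_eq_mul]
    ring
  have horth : star g ⬝ᵥ y = 0 := by
    have hyx : y = x - t • g := by
      funext p
      simp only [hy, Pi.sub_apply, Pi.smul_apply, smul_eq_mul]
      ring
    rw [hyx, dotProduct_sub, dotProduct_smul, dot_self, smul_eq_mul, ht,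
      div_mul_cancel₀ _ hg2ne, sub_self]
  have horth' : star y ⬝ᵥ g = 0 := by
    rw [← conj_dot, horth, map_zero]
  have hAg : star y ⬝ᵥ (A *ᵥ g) = 0 := by
    rw [heig, dotProduct_smul, horth', smul_zero]
  have hgA : star g ⬝ᵥ (A *ᵥ y) = 0 := by
    rw [Matrix.dotProduct_mulVec]
    have : star g ᵥ* A = star ((lam : ℂ) • g) := by
      rw [← heig, Matrix.star_mulVec, hA.eq]
    rw [this, star_smul, smul_dotProduct, horth, smul_zero]
  have hgAg : star g ⬝ᵥ (A *ᵥ g) = (lam : ℂ) * ((nsq g : ℝ) : ℂ) := by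
    rw [heig, dotProduct_smul, dot_self, smul_eq_mul]
  -- expand the quadratic form
  have hstar : star x = star y + (starRingEnd ℂ) t • star g := by
    rw [hx, star_add, star_smul]
    rfl
  have hmul : A *ᵥ x = A *ᵥ y + t • (A *ᵥ g) := by
    rw [hx, Matrix.mulVec_add, Matrix.mulVec_smul]
  have hexp : star x ⬝ᵥ (A *ᵥ x)
      = star y ⬝ᵥ (A *ᵥ y) + (starRingEnd ℂ) t * t * ((lam : ℂ) * ((nsq g : ℝ) : ℂ)) := by
    rw [hstar, hmul, add_dotProduct, dotProduct_add, dotProduct_add,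
      smul_dotProduct, smul_dotProduct, dotProduct_smul,
      dotProduct_smul, hAg, hgA, hgAg]
    simp only [smul_eq_mul, mul_zero, add_zero, zero_add]
    ring
  have hnsqx : ((nsq x : ℝ) : ℂ)
      = ((nsq y : ℝ) : ℂ) + (starRingEnd ℂ) t * t * ((nsq g : ℝ) : ℂ) := by
    rw [← dot_self, ← dot_self, hstar, hx, add_dotProduct, dotProduct_add,
      dotProduct_add, smul_dotProduct, smul_dotProduct,
      dotProduct_smul, dotProduct_smul, horth, horth', dot_self]
    simp only [smul_eq_mul, mul_zero, add_zero, zero_add]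
    rw [dot_self g]
    ring
  have hquad : (lam + Δ) * nsq y ≤ (star y ⬝ᵥ (A *ᵥ y)).re :=
    herm_quad_gap hA hg heig hgap hsimple y horth
  have hct : (starRingEnd ℂ) t * t = ((Complex.normSq t : ℝ) : ℂ) := by
    rw [← Complex.normSq_eq_conj_mul_self]
  rw [hct] at hexp hnsqx
  have hcast : (((Complex.normSq t : ℝ) : ℂ) * ((lam : ℂ) * ((nsq g : ℝ) : ℂ)))
      = (((Complex.normSq t * (lam * nsq g) : ℝ)) : ℂ) := by
    push_cast
    ring
  have hre : (star x ⬝ᵥ (A *ᵥ x)).re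
      = (star y ⬝ᵥ (A *ᵥ y)).re + Complex.normSq t * (lam * nsq g) := by
    rw [hexp, hcast, Complex.add_re, Complex.ofReal_re]
  have hnsqx' : nsq x = nsq y + Complex.normSq t * nsq g := by
    exact_mod_cast hnsqx
  have hnt : 0 ≤ Complex.normSq t := Complex.normSq_nonneg t
  rw [hre, hnsqx']
  nlinarith [hquad]

lemma dot_kronL (A : Matrix (Fin n) (Fin n) ℂ) (v : Fin n × Fin m → ℂ) :
    star v ⬝ᵥ ((A ⊗ₖ (1 : Matrix (Fin m) (Fin m) ℂ)) *ᵥ v)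
      = ∑ j, star (fun p => v (p, j)) ⬝ᵥ (A *ᵥ fun p => v (p, j)) := by
  unfold dotProduct
  rw [Fintype.sum_prod_type, Finset.sum_comm]
  refine Finset.sum_congr rfl fun j _ => Finset.sum_congr rfl fun i _ => ?_
  rw [kronL_mulVec]
  rfl

lemma dot_kronR (B : Matrix (Fin m) (Fin m) ℂ) (v : Fin n × Fin m → ℂ) :
    star v ⬝ᵥ (((1 : Matrix (Fin n) (Fin n) ℂ) ⊗ₖ B) *ᵥ v)
      = ∑ i, star (fun q => v (i, q)) ⬝ᵥ (B *ᵥ fun q => v (i, q)) := by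
  unfold dotProduct
  rw [Fintype.sum_prod_type]
  refine Finset.sum_congr rfl fun i _ => Finset.sum_congr rfl fun j _ => ?_
  rw [kronR_mulVec]
  rfl

lemma geom_sum_Icc' {β : ℝ} (hβ1 : β ≠ 1) (k : ℕ) :
    ∑ i ∈ Finset.Icc 1 k, β ^ i = β * (1 - β ^ k) / (1 - β) := by
  have h1 : ∑ i ∈ Finset.Icc 1 k, β ^ i = ∑ i ∈ Finset.range k, β ^ (1 + i) := by
    rw [← Finset.Ico_add_one_right_eq_Icc, Finset.sum_Ico_eq_sum_range]
    simp
  have h2 : ∑ i ∈ Finset.range k, β ^ (1 + i) = β * ∑ i ∈ Finset.range k, β ^ i := by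
    rw [Finset.mul_sum]
    exact Finset.sum_congr rfl fun i _ => by rw [pow_add, pow_one]
  rw [h1, h2, geom_sum_eq hβ1]
  have hne : β - 1 ≠ 0 := sub_ne_zero.2 hβ1
  have hne' : (1 : ℝ) - β ≠ 0 := fun h => hne (by linarith [h])
  field_simp
  ring

end SGS

/-- Theorem 1 (abstract form): for
`H = H_C ⊗ 1 + 1 ⊗ H_R + ∑_{i=1}^k ∑_{q=1}^{Q_i} β^i X_{i,q} ⊗ Y_{i,q}` with
`β ∈ (0,1)`, `H_C` having simple ground state `gC` (energy `lamC`, gap `ΔC`),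
superstability `X_{i,q} gC = 0`, and
`β (1-β^k)/(1-β) · Q̄ · X̄ · Ȳ < ΔC`, the ground energy of `H` is
`lamC + min spec H_R` and every ground state has the form `gC ⊗ ψ` with `ψ` a ground
state of `H_R`. -/
theorem superstable_ground_state_theorem
    {n m : ℕ} (k : ℕ) (hk : 1 ≤ k) (Q : ℕ → ℕ)
    (HC : Matrix (Fin n) (Fin n) ℂ) (HR : Matrix (Fin m) (Fin m) ℂ)
    (X : ℕ → ℕ → Matrix (Fin n) (Fin n) ℂ) (Y : ℕ → ℕ → Matrix (Fin m) (Fin m) ℂ)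
    (β lamC ΔC lamR Qbar Xbar Ybar : ℝ) (hβ : β ∈ Set.Ioo (0 : ℝ) 1)
    (H : Matrix (Fin n × Fin m) (Fin n × Fin m) ℂ)
    (hH : H = HC ⊗ₖ (1 : Matrix (Fin m) (Fin m) ℂ)
        + (1 : Matrix (Fin n) (Fin n) ℂ) ⊗ₖ HR
        + ∑ i ∈ Finset.Icc 1 k, ∑ q ∈ Finset.Icc 1 (Q i),
            (β ^ i : ℝ) • (X i q ⊗ₖ Y i q))
    (hHerm : H.IsHermitian) (hHCherm : HC.IsHermitian) (hHRherm : HR.IsHermitian)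
    (gC : Fin n → ℂ) (hgC : gC ≠ 0) (heig : HC.mulVec gC = (lamC : ℂ) • gC)
    (hΔ : 0 < ΔC)
    (hgap : ∀ (v : Fin n → ℂ) (μ : ℝ), v ≠ 0 → HC.mulVec v = (μ : ℂ) • v →
      μ = lamC ∨ lamC + ΔC ≤ μ)
    (hsimple : ∀ v : Fin n → ℂ, HC.mulVec v = (lamC : ℂ) • v → ∃ c : ℂ, v = c • gC)
    (hsuperstable : ∀ i ∈ Finset.Icc 1 k, ∀ q ∈ Finset.Icc 1 (Q i),
      (X i q).mulVec gC = 0)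
    (hQbar : ∀ i ∈ Finset.Icc 1 k, (Q i : ℝ) ≤ Qbar)
    (hXbar : ∀ i ∈ Finset.Icc 1 k, ∀ q ∈ Finset.Icc 1 (Q i), opNorm (X i q) ≤ Xbar)
    (hYbar : ∀ i ∈ Finset.Icc 1 k, ∀ q ∈ Finset.Icc 1 (Q i), opNorm (Y i q) ≤ Ybar)
    (hlamR : IsLeast {μ : ℝ | ∃ ψ : Fin m → ℂ, ψ ≠ 0 ∧ HR.mulVec ψ = (μ : ℂ) • ψ} lamR)
    (hsmall : β * (1 - β ^ k) / (1 - β) * Qbar * Xbar * Ybar < ΔC) :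
    IsLeast {E : ℝ | ∃ v : Fin n × Fin m → ℂ, v ≠ 0 ∧ H.mulVec v = (E : ℂ) • v}
      (lamC + lamR) ∧
    (∀ v : Fin n × Fin m → ℂ, v ≠ 0 →
      H.mulVec v = ((lamC + lamR : ℝ) : ℂ) • v →
      ∃ ψ : Fin m → ℂ, (v = fun p => gC p.1 * ψ p.2) ∧
        HR.mulVec ψ = (lamR : ℂ) • ψ) := by
  classical
  obtain ⟨hβ0, hβ1⟩ := hβ
  obtain ⟨i0, hi0⟩ : ∃ i, gC i ≠ 0 := Function.ne_iff.1 hgC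
  have hg2 : (0 : ℝ) < SGS.nsq gC := by
    rcases lt_or_eq_of_le (SGS.nsq_nonneg gC) with h | h
    · exact h
    · exact absurd (SGS.nsq_eq_zero_iff.1 h.symm) hgC
  set W : Matrix (Fin n × Fin m) (Fin n × Fin m) ℂ :=
    ∑ i ∈ Finset.Icc 1 k, ∑ q ∈ Finset.Icc 1 (Q i), (β ^ i : ℝ) • (X i q ⊗ₖ Y i q) with hW
  set A1 : Matrix (Fin n × Fin m) (Fin n × Fin m) ℂ
    := HC ⊗ₖ (1 : Matrix (Fin m) (Fin m) ℂ) with hA1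
  set A2 : Matrix (Fin n × Fin m) (Fin n × Fin m) ℂ
    := (1 : Matrix (Fin n) (Fin n) ℂ) ⊗ₖ HR with hA2
  set S : ℝ := ∑ i ∈ Finset.Icc 1 k, ∑ q ∈ Finset.Icc 1 (Q i),
    β ^ i * (opNorm (X i q) * opNorm (Y i q)) with hSdef
  have hS_nonneg : 0 ≤ S :=
    Finset.sum_nonneg fun i _ => Finset.sum_nonneg fun q _ =>
      mul_nonneg (pow_nonneg hβ0.le i)
        (mul_nonneg (SGS.opNorm_nonneg _) (SGS.opNorm_nonneg _))
  have hS_lt : S < ΔC := by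
    by_cases hne : ∃ i ∈ Finset.Icc 1 k, ∃ q, q ∈ Finset.Icc 1 (Q i)
    · obtain ⟨i1, hi1, q1, hq1⟩ := hne
      have hX0 : 0 ≤ Xbar := le_trans (SGS.opNorm_nonneg _) (hXbar i1 hi1 q1 hq1)
      have hY0 : 0 ≤ Ybar := le_trans (SGS.opNorm_nonneg _) (hYbar i1 hi1 q1 hq1)
      calc S ≤ ∑ i ∈ Finset.Icc 1 k, ∑ q ∈ Finset.Icc 1 (Q i), β ^ i * (Xbar * Ybar) := by
              refine Finset.sum_le_sum fun i hi => Finset.sum_le_sum fun q hq => ?_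
              refine mul_le_mul_of_nonneg_left ?_ (pow_nonneg hβ0.le i)
              exact mul_le_mul (hXbar i hi q hq) (hYbar i hi q hq)
                (SGS.opNorm_nonneg _) hX0
        _ = ∑ i ∈ Finset.Icc 1 k, (Q i : ℝ) * (β ^ i * (Xbar * Ybar)) := by
              refine Finset.sum_congr rfl fun i hi => ?_
              rw [Finset.sum_const, Nat.card_Icc]
              simp
        _ ≤ ∑ i ∈ Finset.Icc 1 k, Qbar * (β ^ i * (Xbar * Ybar)) := by
              refine Finset.sum_le_sum fun i hi => ?_
              exact mul_le_mul_of_nonneg_right (hQbar i hi)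
                (mul_nonneg (pow_nonneg hβ0.le i) (mul_nonneg hX0 hY0))
        _ = (∑ i ∈ Finset.Icc 1 k, β ^ i) * (Qbar * (Xbar * Ybar)) := by
              rw [Finset.sum_mul]
              exact Finset.sum_congr rfl fun i _ => by ring
        _ = β * (1 - β ^ k) / (1 - β) * Qbar * Xbar * Ybar := by
              rw [SGS.geom_sum_Icc' (ne_of_lt hβ1) k]
              ring
        _ < ΔC := hsmall
    · push_neg at hne
      have : S = 0 := Finset.sum_eq_zero fun i hi => by
        have hempty : Finset.Icc 1 (Q i) = ∅ := by
          rw [Finset.eq_empty_iff_forall_notMem]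
          exact hne i hi
        rw [hempty, Finset.sum_empty]
      rw [this]
      exact hΔ
  have hWmul : ∀ u : Fin n × Fin m → ℂ, W *ᵥ u
      = ∑ i ∈ Finset.Icc 1 k, ∑ q ∈ Finset.Icc 1 (Q i),
        (β ^ i : ℝ) • ((X i q ⊗ₖ Y i q) *ᵥ u) := by
    intro u
    rw [hW, SGS.sum_mulVec]
    refine Finset.sum_congr rfl fun i _ => ?_
    rw [SGS.sum_mulVec]
    refine Finset.sum_congr rfl fun q _ => ?_
    rw [Matrix.smul_mulVec]
  have hquadW : ∀ u : Fin n × Fin m → ℂ, |(star u ⬝ᵥ (W *ᵥ u)).re| ≤ S * SGS.nsq u := by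
    intro u
    rw [hWmul u, SGS.dot_sum]
    calc |(∑ i ∈ Finset.Icc 1 k,
            star u ⬝ᵥ ∑ q ∈ Finset.Icc 1 (Q i), (β ^ i : ℝ) • ((X i q ⊗ₖ Y i q) *ᵥ u)).re|
        = |∑ i ∈ Finset.Icc 1 k, (star u ⬝ᵥ ∑ q ∈ Finset.Icc 1 (Q i),
            (β ^ i : ℝ) • ((X i q ⊗ₖ Y i q) *ᵥ u)).re| := by rw [Complex.re_sum]
      _ ≤ ∑ i ∈ Finset.Icc 1 k, |(star u ⬝ᵥ ∑ q ∈ Finset.Icc 1 (Q i),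
            (β ^ i : ℝ) • ((X i q ⊗ₖ Y i q) *ᵥ u)).re| := Finset.abs_sum_le_sum_abs _ _
      _ ≤ ∑ i ∈ Finset.Icc 1 k, ∑ q ∈ Finset.Icc 1 (Q i),
            β ^ i * (opNorm (X i q) * opNorm (Y i q) * SGS.nsq u) := by
          refine Finset.sum_le_sum fun i hi => ?_
          rw [SGS.dot_sum, Complex.re_sum]
          refine le_trans (Finset.abs_sum_le_sum_abs _ _) (Finset.sum_le_sum fun q hq => ?_)
          rw [dotProduct_smul, Complex.smul_re, smul_eq_mul, abs_mul,
            abs_of_pos (pow_pos hβ0 i)]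
          refine mul_le_mul_of_nonneg_left ?_ (le_of_lt (pow_pos hβ0 i))
          exact le_trans (Complex.abs_re_le_norm _) (SGS.kron_quad_bound _ _ u)
      _ = S * SGS.nsq u := by
          rw [hSdef, Finset.sum_mul]
          refine Finset.sum_congr rfl fun i _ => ?_
          rw [Finset.sum_mul]
          exact Finset.sum_congr rfl fun q _ => by ring
  have hA1herm : A1.IsHermitian := by
    rw [Matrix.IsHermitian, hA1, SGS.kron_conjT, Matrix.conjTranspose_one, hHCherm.eq]
  have hA2herm : A2.IsHermitian := by
    rw [Matrix.IsHermitian, hA2, SGS.kron_conjT, Matrix.conjTranspose_one, hHRherm.eq]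
  have hWherm : W.IsHermitian := by
    have hWeq : W = H - A1 - A2 := by
      rw [hH]
      abel
    rw [hWeq]
    exact (hHerm.sub hA1herm).sub hA2herm
  have hpure0 : ∀ ψ' : Fin m → ℂ, W *ᵥ (fun p => gC p.1 * ψ' p.2) = 0 := by
    intro ψ'
    rw [hWmul]
    refine Finset.sum_eq_zero fun i hi => Finset.sum_eq_zero fun q hq => ?_
    rw [SGS.kron_mulVec_pure, hsuperstable i hi q hq]
    have : (fun p : Fin n × Fin m => (0 : Fin n → ℂ) p.1 * ((Y i q) *ᵥ ψ') p.2)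
        = (0 : Fin n × Fin m → ℂ) := by
      funext p
      simp
    rw [this, smul_zero]
  have hpure : ∀ (ψ' : Fin m → ℂ) (μ : ℝ), HR *ᵥ ψ' = (μ : ℂ) • ψ' →
      H *ᵥ (fun p : Fin n × Fin m => gC p.1 * ψ' p.2)
        = ((lamC + μ : ℝ) : ℂ) • (fun p : Fin n × Fin m => gC p.1 * ψ' p.2) := by
    intro ψ' μ hμ
    have hHeq : H = A1 + A2 + W := hH
    rw [hHeq, Matrix.add_mulVec, Matrix.add_mulVec, hpure0 ψ', add_zero, hA1, hA2,
      SGS.kron_mulVec_pure, SGS.kron_mulVec_pure, heig, hμ, Matrix.one_mulVec,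
      Matrix.one_mulVec]
    funext p
    simp only [Pi.add_apply, Pi.smul_apply, smul_eq_mul]
    push_cast
    ring
  have hRlb : ∀ x : Fin m → ℂ, lamR * SGS.nsq x ≤ (star x ⬝ᵥ (HR *ᵥ x)).re :=
    SGS.herm_quad_ground hHRherm (fun v μ hv he => hlamR.2 ⟨v, hv, he⟩)
  -- the key lower bound and rigidity statement
  have key : ∀ (E : ℝ) (v : Fin n × Fin m → ℂ), v ≠ 0 → H *ᵥ v = (E : ℂ) • v →
      lamC + lamR ≤ E ∧ (E ≤ lamC + lamR →
        ∃ ψ : Fin m → ℂ, (v = fun p => gC p.1 * ψ p.2) ∧ HR *ᵥ ψ = (lamR : ℂ) • ψ) := by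
    intro E v hvne heis
    set ψ : Fin m → ℂ :=
      fun j => (star gC ⬝ᵥ fun p => v (p, j)) / ((SGS.nsq gC : ℝ) : ℂ) with hψ
    set G : Fin n × Fin m → ℂ := fun p => gC p.1 * ψ p.2 with hG
    set u : Fin n × Fin m → ℂ := fun p => v p - G p with hu
    have hvu : v = fun p => u p + G p := by
      funext p
      simp [hu]
    -- (1) HC ⊗ 1 part
    have h1 : lamC * SGS.nsq v + ΔC * SGS.nsq u ≤ (star v ⬝ᵥ (A1 *ᵥ v)).re := by
      rw [hA1, SGS.dot_kronL, Complex.re_sum]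
      have hterm : ∀ j, lamC * SGS.nsq (fun p => v (p, j)) + ΔC * SGS.nsq (fun p => u (p, j))
          ≤ (star (fun p => v (p, j)) ⬝ᵥ (HC *ᵥ fun p => v (p, j))).re := by
        intro j
        have hcb := SGS.col_bound hHCherm hg2 heig hgap hsimple (fun p => v (p, j))
        have huj : (fun p => u (p, j))
            = fun p => v (p, j) - gC p * ((star gC ⬝ᵥ fun p' => v (p', j))
              / ((SGS.nsq gC : ℝ) : ℂ)) := rfl
        rw [huj]
        exact hcb
      calc lamC * SGS.nsq v + ΔC * SGS.nsq u
          = ∑ j, (lamC * SGS.nsq (fun p => v (p, j)) + ΔC * SGS.nsq (fun p => u (p, j))) := by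
            rw [SGS.nsq_prod_col v, SGS.nsq_prod_col u, Finset.mul_sum, Finset.mul_sum,
              ← Finset.sum_add_distrib]
        _ ≤ ∑ j, (star (fun p => v (p, j)) ⬝ᵥ (HC *ᵥ fun p => v (p, j))).re :=
            Finset.sum_le_sum fun j _ => hterm j
    -- (2) 1 ⊗ HR part
    have h2 : lamR * SGS.nsq v ≤ (star v ⬝ᵥ (A2 *ᵥ v)).re := by
      rw [hA2, SGS.dot_kronR, Complex.re_sum, SGS.nsq_prod_row v, Finset.mul_sum]
      exact Finset.sum_le_sum fun i _ => hRlb (fun q => v (i, q))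
    -- (3) coupling part
    have hcolu : ∀ j, star gC ⬝ᵥ (fun p => u (p, j)) = 0 := by
      intro j
      have hg2ne : ((SGS.nsq gC : ℝ) : ℂ) ≠ 0 := by exact_mod_cast ne_of_gt hg2
      have huj : (fun p => u (p, j))
          = (fun p => v (p, j)) - ψ j • gC := by
        funext p
        simp only [hu, hG, Pi.sub_apply, Pi.smul_apply, smul_eq_mul]
        ring
      rw [huj, dotProduct_sub, dotProduct_smul, SGS.dot_self, smul_eq_mul, hψ,
        div_mul_cancel₀ _ hg2ne, sub_self]
    have hWG : W *ᵥ G = 0 := hpure0 ψ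
    have hdotW : star v ⬝ᵥ (W *ᵥ v) = star u ⬝ᵥ (W *ᵥ u) := by
      have hvuG : v = u + G := by
        funext p
        simp [hu]
      have hWv : W *ᵥ v = W *ᵥ u := by
        rw [hvuG, Matrix.mulVec_add, hWG, add_zero]
      rw [hWv, hvuG, star_add, add_dotProduct]
      have hGWu : star G ⬝ᵥ (W *ᵥ u) = 0 := by
        rw [Matrix.dotProduct_mulVec]
        have : star G ᵥ* W = star (W *ᵥ G) := by
          rw [Matrix.star_mulVec, hWherm.eq]
        rw [this, hWG]
        simp [zero_dotProduct]
      rw [hGWu, add_zero]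
    have h3 : -(S * SGS.nsq u) ≤ (star v ⬝ᵥ (W *ᵥ v)).re := by
      rw [hdotW]
      exact neg_le_of_abs_le (hquadW u)
    -- total identity
    have hsum : E * SGS.nsq v
        = (star v ⬝ᵥ (A1 *ᵥ v)).re + (star v ⬝ᵥ (A2 *ᵥ v)).re + (star v ⬝ᵥ (W *ᵥ v)).re := by
      have hHeq : H = A1 + A2 + W := hH
      have hlhs : star v ⬝ᵥ (H *ᵥ v)
          = star v ⬝ᵥ (A1 *ᵥ v) + star v ⬝ᵥ (A2 *ᵥ v) + star v ⬝ᵥ (W *ᵥ v) := by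
        rw [hHeq, Matrix.add_mulVec, Matrix.add_mulVec, dotProduct_add,
          dotProduct_add]
      have hrhs : star v ⬝ᵥ (H *ᵥ v) = (E : ℂ) * ((SGS.nsq v : ℝ) : ℂ) := by
        rw [heis, dotProduct_smul, SGS.dot_self, smul_eq_mul]
      have := hlhs.symm.trans hrhs
      have hre := congrArg Complex.re this
      simp only [Complex.add_re] at hre
      rw [hre, ← Complex.ofReal_mul, Complex.ofReal_re]
    have hnv : 0 < SGS.nsq v := by
      rcases lt_or_eq_of_le (SGS.nsq_nonneg v) with h | h
      · exact h
      · exact absurd (SGS.nsq_eq_zero_iff.1 h.symm) hvne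
    have hnu : 0 ≤ SGS.nsq u := SGS.nsq_nonneg u
    constructor
    · nlinarith
    · intro hEle
      have hu0 : SGS.nsq u = 0 := by nlinarith
      have huz : u = 0 := SGS.nsq_eq_zero_iff.1 hu0
      have hvG : v = G := by
        funext p
        have := congrFun huz p
        simp only [hu, Pi.zero_apply] at this
        exact sub_eq_zero.1 this
      refine ⟨ψ, hvG, ?_⟩
      -- derive the HR eigen-equation
      have hEeq : E = lamC + lamR := le_antisymm hEle (by nlinarith)
      have heisG : A1 *ᵥ G + A2 *ᵥ G + W *ᵥ G = ((lamC + lamR : ℝ) : ℂ) • G := by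
        have hHeq : H = A1 + A2 + W := hH
        have := heis
        rw [hvG, hHeq, Matrix.add_mulVec, Matrix.add_mulVec] at this
        rw [this, hEeq]
      have hA1G : A1 *ᵥ G = ((lamC : ℝ) : ℂ) • G := by
        rw [hA1, hG, SGS.kron_mulVec_pure, heig, Matrix.one_mulVec]
        funext p
        simp only [Pi.smul_apply, smul_eq_mul]
        ring
      have hA2G : A2 *ᵥ G = fun p => gC p.1 * (HR *ᵥ ψ) p.2 := by
        rw [hA2, hG, SGS.kron_mulVec_pure, Matrix.one_mulVec]
      rw [hA1G, hA2G, hWG, add_zero] at heisG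
      funext j
      have := congrFun heisG (i0, j)
      simp only [Pi.add_apply, Pi.smul_apply, smul_eq_mul, hG] at this
      have hcalc : gC i0 * (HR *ᵥ ψ) j = gC i0 * ((lamR : ℂ) * ψ j) := by
        push_cast at this ⊢
        ring_nf at this ⊢
        linear_combination this
      exact mul_left_cancel₀ hi0 hcalc
  obtain ⟨ψ0, hψ0ne, hψ0⟩ := hlamR.1
  obtain ⟨j0, hj0⟩ : ∃ j, ψ0 j ≠ 0 := Function.ne_iff.1 hψ0ne
  have hGne : (fun p : Fin n × Fin m => gC p.1 * ψ0 p.2) ≠ 0 := by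
    intro h
    have := congrFun h (i0, j0)
    simp only [Pi.zero_apply] at this
    exact absurd (mul_eq_zero.1 this) (by push_neg; exact ⟨hi0, hj0⟩)
  refine ⟨⟨⟨_, hGne, by simpa using hpure ψ0 lamR hψ0⟩, ?_⟩, ?_⟩
  · rintro E ⟨v, hv, he⟩
    exact (key E v hv he).1
  · intro v hv he
    exact (key (lamC + lamR) v hv he).2 le_rfl
end

section
/- Let H₀ and H₁ be Hermitian operators on a finite-dimensional Hilbert space, both commuting with a Hermitian operator P (a conserved quantum number). Suppose the ground state of H₀ lies in the eigenspace of P with eigenvalue p₀, the ground state of H₁ lies in the eigenspace with eigenvalue p₁, and p₀ ≠ p₁. Then along the linear interpolation H(s) = (1-s)H₀ + sH₁, s ∈ [0,1], there exists s* ∈ [0,1] at which the minimal eigenvalue of H(s) restricted to the P = p₀ eigenspace equals the minimal eigenvalue restricted to the P = p₁ eigenspace (a ground state level crossing). -/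
/-- The minimal eigenvalue of `M` restricted to the `P = p` eigenspace (as an infimum
over eigenvalues with eigenvector in that eigenspace). -/
noncomputable def minInSector {n : ℕ} (M P : Matrix (Fin n) (Fin n) ℂ) (p : ℝ) : ℝ :=
  sInf {E : ℝ | ∃ v : Fin n → ℂ, v ≠ 0 ∧ P.mulVec v = (p : ℂ) • v ∧
    M.mulVec v = (E : ℂ) • v}



open Matrix Module.End

namespace GSLC

variable {F : Type*} [NormedAddCommGroup F] [InnerProductSpace ℂ F] [FiniteDimensional ℂ F]

/-- Rayleigh-type infimum of `T` over the nonzero vectors of a submodule `V`. -/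
noncomputable def rayGen (T : F →ₗ[ℂ] F) (V : Submodule ℂ F) : ℝ :=
  ⨅ x : {x : ↥V // x ≠ 0},
    RCLike.re (inner (𝕜 := ℂ) (T ((x : ↥V) : F)) ((x : ↥V) : F)) / ‖((x : ↥V) : F)‖ ^ 2

lemma rayGen_term_abs_le (T : F →ₗ[ℂ] F) (x : F) (hx : x ≠ 0) :
    |RCLike.re (inner (𝕜 := ℂ) (T x) x) / ‖x‖ ^ 2|
      ≤ ‖LinearMap.toContinuousLinearMap T‖ := by
  set A := LinearMap.toContinuousLinearMap T
  have hxn : (0:ℝ) < ‖x‖ := norm_pos_iff.2 hx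
  rw [abs_div, abs_of_nonneg (by positivity : (0:ℝ) ≤ ‖x‖ ^ 2), div_le_iff₀ (by positivity)]
  calc |RCLike.re (inner (𝕜 := ℂ) (T x) x)|
      ≤ ‖(inner (𝕜 := ℂ) (T x) x)‖ := RCLike.abs_re_le_norm _
    _ ≤ ‖T x‖ * ‖x‖ := norm_inner_le_norm _ _
    _ = ‖A x‖ * ‖x‖ := rfl
    _ ≤ (‖A‖ * ‖x‖) * ‖x‖ := by gcongr; exact A.le_opNorm x
    _ = ‖A‖ * ‖x‖ ^ 2 := by ring

lemma rayGen_bddBelow (T : F →ₗ[ℂ] F) (V : Submodule ℂ F) :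
    BddBelow (Set.range fun x : {x : ↥V // x ≠ 0} =>
      RCLike.re (inner (𝕜 := ℂ) (T ((x : ↥V) : F)) ((x : ↥V) : F)) / ‖((x : ↥V) : F)‖ ^ 2) := by
  refine ⟨-‖LinearMap.toContinuousLinearMap T‖, ?_⟩
  rintro r ⟨x, rfl⟩
  have hx : ((x : ↥V) : F) ≠ 0 := by simpa [Submodule.coe_eq_zero] using x.2
  have := rayGen_term_abs_le T ((x : ↥V) : F) hx
  linarith [(abs_le.1 this).1]

lemma rayGen_isLeast (T : F →ₗ[ℂ] F) (hT : T.IsSymmetric) (V : Submodule ℂ F)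
    [Nontrivial ↥V] (hmaps : ∀ v ∈ V, T v ∈ V) :
    IsLeast {E : ℝ | ∃ v : F, v ≠ 0 ∧ v ∈ V ∧ T v = ((E : ℝ) : ℂ) • v} (rayGen T V) := by
  set S := T.restrict hmaps with hS_def
  have hSsym : S.IsSymmetric := hT.restrict_invariant hmaps
  have hray : rayGen T V
      = ⨅ x : {x : ↥V // x ≠ 0},
          RCLike.re (inner (𝕜 := ℂ) (S (x : ↥V)) (x : ↥V)) / ‖(x : ↥V)‖ ^ 2 := by
    refine iInf_congr fun x => ?_
    rw [Submodule.coe_inner, LinearMap.restrict_coe_apply]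
    rfl
  have heig : Module.End.HasEigenvalue S ((rayGen T V : ℝ) : ℂ) := by
    rw [hray]
    exact hSsym.hasEigenvalue_iInf_of_finiteDimensional
  constructor
  · obtain ⟨x, hx⟩ := heig.exists_hasEigenvector
    refine ⟨((x : ↥V) : F), ?_, x.2, ?_⟩
    · simpa [Submodule.coe_eq_zero] using hx.2
    · have h1 := hx.apply_eq_smul
      have h2 := congrArg (Subtype.val) h1
      simpa [hS_def, LinearMap.restrict_coe_apply] using h2
  · rintro E ⟨v, hv0, hvV, hvT⟩
    have hvne : (⟨v, hvV⟩ : ↥V) ≠ 0 := by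
      simp only [ne_eq, Submodule.mk_eq_zero]; exact hv0
    have hterm : RCLike.re (inner (𝕜 := ℂ) (T v) v) / ‖v‖ ^ 2 = E := by
      rw [hvT, inner_smul_left, inner_self_eq_norm_sq_to_K]
      have hvn : (0:ℝ) < ‖v‖ := norm_pos_iff.2 hv0
      simp only [RCLike.star_def, Complex.conj_ofReal]
      simp only [RCLike.re_to_complex, Complex.mul_re, Complex.ofReal_re,
        Complex.ofReal_im, mul_zero, sub_zero, zero_mul]
      field_simp
      congr 1
      norm_cast
    calc rayGen T V ≤ _ := ciInf_le (rayGen_bddBelow T V)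
          (⟨⟨v, hvV⟩, hvne⟩ : {x : ↥V // x ≠ 0})
      _ = E := hterm

/-- inf-difference bound. -/
lemma rayGen_sub_abs_le (T T' : F →ₗ[ℂ] F) (V : Submodule ℂ F) [Nontrivial ↥V] :
    |rayGen T V - rayGen T' V| ≤ ‖LinearMap.toContinuousLinearMap (T - T')‖ := by
  set C := ‖LinearMap.toContinuousLinearMap (T - T')‖ with hC
  set f : (F →ₗ[ℂ] F) → {x : ↥V // x ≠ 0} → ℝ := fun A x =>
    RCLike.re (inner (𝕜 := ℂ) (A ((x : ↥V) : F)) ((x : ↥V) : F)) / ‖((x : ↥V) : F)‖ ^ 2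
    with hf
  have hrayf : ∀ A : F →ₗ[ℂ] F, rayGen A V = ⨅ x, f A x := fun A => rfl
  have hbdd : ∀ A : F →ₗ[ℂ] F, BddBelow (Set.range (f A)) := fun A => rayGen_bddBelow A V
  haveI : Nonempty {x : ↥V // x ≠ 0} := by
    obtain ⟨x, hx⟩ := exists_ne (0 : ↥V)
    exact ⟨⟨x, hx⟩⟩
  have hkey : ∀ (x : {x : ↥V // x ≠ 0}), |f T x - f T' x| ≤ C := by
    intro x
    have hx : ((x : ↥V) : F) ≠ 0 := by simpa [Submodule.coe_eq_zero] using x.2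
    have h := rayGen_term_abs_le (T - T') ((x : ↥V) : F) hx
    calc |f T x - f T' x|
        = |RCLike.re (inner (𝕜 := ℂ) ((T - T') ((x : ↥V) : F)) ((x : ↥V) : F))
          / ‖((x : ↥V) : F)‖ ^ 2| := by
            rw [hf]
            rw [div_sub_div_same, ← map_sub, ← inner_sub_left, ← LinearMap.sub_apply]
      _ ≤ C := h
  have hle : ∀ (A B : F →ₗ[ℂ] F), (∀ x, f A x ≤ f B x + C) →
      rayGen A V - rayGen B V ≤ C := by
    intro A B h
    have h1 : ∀ x, rayGen A V - C ≤ f B x := by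
      intro x
      have h2 : rayGen A V ≤ f A x := by
        rw [hrayf A]; exact ciInf_le (hbdd A) x
      linarith [h x]
    have h3 : rayGen A V - C ≤ rayGen B V := by
      rw [hrayf B]; exact le_ciInf h1
    linarith
  rw [abs_sub_le_iff]
  exact ⟨hle T T' (fun x => by linarith [(abs_le.1 (hkey x)).2]),
    hle T' T (fun x => by linarith [(abs_le.1 (hkey x)).1])⟩

end GSLC

namespace GSLC

variable {n : ℕ}

noncomputable def sector (P : Matrix (Fin n) (Fin n) ℂ) (p : ℝ) :
    Submodule ℂ (EuclideanSpace ℂ (Fin n)) :=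
  Module.End.eigenspace (Matrix.toEuclideanLin P) (p : ℂ)

lemma mem_sector {P : Matrix (Fin n) (Fin n) ℂ} {p : ℝ} {v : EuclideanSpace ℂ (Fin n)} :
    v ∈ sector P p ↔ P.mulVec v = (p : ℂ) • v := by
  rw [sector, Module.End.mem_eigenspace_iff]; exact (WithLp.ofLp_injective 2).eq_iff.symm

lemma sector_mapsTo {M P : Matrix (Fin n) (Fin n) ℂ} (hc : M * P = P * M) (p : ℝ) :
    ∀ v ∈ sector P p, Matrix.toEuclideanLin M v ∈ sector P p := by
  intro v hv
  rw [mem_sector] at hv ⊢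
  show P.mulVec (M.mulVec v) = (p : ℂ) • M.mulVec v
  rw [Matrix.mulVec_mulVec, ← hc, ← Matrix.mulVec_mulVec, hv, Matrix.mulVec_smul]

noncomputable def ray (M P : Matrix (Fin n) (Fin n) ℂ) (p : ℝ) : ℝ :=
  rayGen (Matrix.toEuclideanLin M) (sector P p)

lemma nontrivial_sector {P : Matrix (Fin n) (Fin n) ℂ} {p : ℝ}
    (hne : ∃ v : Fin n → ℂ, v ≠ 0 ∧ P.mulVec v = (p : ℂ) • v) :
    Nontrivial ↥(sector P p) := by
  obtain ⟨w, hw0, hwP⟩ := hne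
  refine ⟨⟨WithLp.toLp 2 w, mem_sector.2 hwP⟩, 0, ?_⟩
  simp only [ne_eq, Submodule.mk_eq_zero]
  exact fun h => hw0 (congrArg WithLp.ofLp h)

lemma ray_isLeast (M P : Matrix (Fin n) (Fin n) ℂ) (hM : M.IsHermitian)
    (hc : M * P = P * M) (p : ℝ)
    (hne : ∃ v : Fin n → ℂ, v ≠ 0 ∧ P.mulVec v = (p : ℂ) • v) :
    IsLeast {E : ℝ | ∃ v : Fin n → ℂ, v ≠ 0 ∧ P.mulVec v = (p : ℂ) • v ∧
      M.mulVec v = (E : ℂ) • v} (ray M P p) := by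
  haveI := nontrivial_sector hne
  have h := rayGen_isLeast (Matrix.toEuclideanLin M)
    (Matrix.isHermitian_iff_isSymmetric.1 hM) (sector P p) (sector_mapsTo hc p)
  have hset : {E : ℝ | ∃ v : EuclideanSpace ℂ (Fin n), v ≠ 0 ∧ v ∈ sector P p ∧
      Matrix.toEuclideanLin M v = ((E : ℝ) : ℂ) • v}
      = {E : ℝ | ∃ v : Fin n → ℂ, v ≠ 0 ∧ P.mulVec v = (p : ℂ) • v ∧
      M.mulVec v = (E : ℂ) • v} := by
    ext E
    constructor
    · rintro ⟨v, h1, h2, h3⟩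
      exact ⟨v.ofLp, fun h => h1 (congrArg (WithLp.toLp 2) h), mem_sector.1 h2, congrArg WithLp.ofLp h3⟩
    · rintro ⟨v, h1, h2, h3⟩
      exact ⟨WithLp.toLp 2 v, fun h => h1 (congrArg WithLp.ofLp h), mem_sector.2 h2, congrArg (WithLp.toLp 2) h3⟩
  rw [← hset]
  exact h

end GSLC

namespace GSLC

lemma real_smul_matrix (r : ℝ) (A : Matrix (Fin n) (Fin n) ℂ) :
    r • A = ((r : ℂ)) • A := by
  ext i j
  simp [Complex.real_smul]

lemma ray_continuous (H0 H1 P : Matrix (Fin n) (Fin n) ℂ) (p : ℝ)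
    (hne : ∃ v : Fin n → ℂ, v ≠ 0 ∧ P.mulVec v = (p : ℂ) • v) :
    Continuous fun s : ℝ => ray ((1 - s) • H0 + s • H1) P p := by
  haveI := nontrivial_sector hne
  set C : ℝ := ‖LinearMap.toContinuousLinearMap (Matrix.toEuclideanLin (H1 - H0))‖ with hC
  have hCnn : 0 ≤ C := norm_nonneg _
  have key : ∀ s t : ℝ,
      |ray ((1 - s) • H0 + s • H1) P p - ray ((1 - t) • H0 + t • H1) P p|
        ≤ C * |s - t| := by
    intro s t
    have h1 := rayGen_sub_abs_le (Matrix.toEuclideanLin ((1 - s) • H0 + s • H1))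
      (Matrix.toEuclideanLin ((1 - t) • H0 + t • H1)) (sector P p)
    have hdiff : ((1 - s) • H0 + s • H1) - ((1 - t) • H0 + t • H1)
        = ((s - t : ℝ) : ℂ) • (H1 - H0) := by
      rw [← real_smul_matrix]
      module
    have h2 : Matrix.toEuclideanLin ((1 - s) • H0 + s • H1)
        - Matrix.toEuclideanLin ((1 - t) • H0 + t • H1)
        = ((s - t : ℝ) : ℂ) • Matrix.toEuclideanLin (H1 - H0) := by
      rw [← map_sub, hdiff, _root_.map_smul]
    have h3 : ‖LinearMap.toContinuousLinearMap
        (Matrix.toEuclideanLin ((1 - s) • H0 + s • H1)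
          - Matrix.toEuclideanLin ((1 - t) • H0 + t • H1))‖ = C * |s - t| := by
      rw [h2, _root_.map_smul]
      rw [norm_smul ((s - t : ℝ) : ℂ)
        (LinearMap.toContinuousLinearMap (Matrix.toEuclideanLin (H1 - H0)))]
      rw [Complex.norm_real, Real.norm_eq_abs]
      ring
    calc |ray ((1 - s) • H0 + s • H1) P p - ray ((1 - t) • H0 + t • H1) P p|
        ≤ _ := h1
      _ = C * |s - t| := h3
  have hlip : LipschitzWith (Real.toNNReal C) fun s : ℝ =>
      ray ((1 - s) • H0 + s • H1) P p := by
    rw [lipschitzWith_iff_dist_le_mul]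
    intro s t
    rw [Real.dist_eq, Real.dist_eq, Real.coe_toNNReal C hCnn]
    exact key s t
  exact hlip.continuous

end GSLC


/-- Ground-state level crossing: if Hermitian `H₀, H₁` both commute with a Hermitian
conserved quantity `P`, the ground state of `H₀` lies in the `P = p₀` eigenspace, the
ground state of `H₁` lies in the `P = p₁` eigenspace, and `p₀ ≠ p₁`, then along
`H(s) = (1-s)H₀ + sH₁` there is some `s* ∈ [0,1]` where the minimal eigenvalues in the
two sectors coincide. -/
theorem ground_state_level_crossing {n : ℕ}
    (H0 H1 P : Matrix (Fin n) (Fin n) ℂ)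
    (hH0 : H0.IsHermitian) (hH1 : H1.IsHermitian) (hP : P.IsHermitian)
    (hc0 : H0 * P = P * H0) (hc1 : H1 * P = P * H1)
    (p0 p1 : ℝ) (hp : p0 ≠ p1) (E0 E1 : ℝ)
    (hg0 : IsLeast {E : ℝ | ∃ v : Fin n → ℂ, v ≠ 0 ∧ H0.mulVec v = (E : ℂ) • v} E0)
    (hv0 : ∃ v : Fin n → ℂ, v ≠ 0 ∧ P.mulVec v = (p0 : ℂ) • v ∧
      H0.mulVec v = (E0 : ℂ) • v)
    (hg1 : IsLeast {E : ℝ | ∃ v : Fin n → ℂ, v ≠ 0 ∧ H1.mulVec v = (E : ℂ) • v} E1)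
    (hv1 : ∃ v : Fin n → ℂ, v ≠ 0 ∧ P.mulVec v = (p1 : ℂ) • v ∧
      H1.mulVec v = (E1 : ℂ) • v)
    (honly0 : ∀ v : Fin n → ℂ, v ≠ 0 → H0.mulVec v = (E0 : ℂ) • v →
      P.mulVec v = (p0 : ℂ) • v)
    (honly1 : ∀ v : Fin n → ℂ, v ≠ 0 → H1.mulVec v = (E1 : ℂ) • v →
      P.mulVec v = (p1 : ℂ) • v) :
    ∃ s ∈ Set.Icc (0 : ℝ) 1,
      minInSector ((1 - s) • H0 + s • H1) P p0
        = minInSector ((1 - s) • H0 + s • H1) P p1 := by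
  obtain ⟨w0, hw00, hw0P, hw0H⟩ := hv0
  obtain ⟨w1, hw10, hw1P, hw1H⟩ := hv1
  have hne0 : ∃ v : Fin n → ℂ, v ≠ 0 ∧ P.mulVec v = (p0 : ℂ) • v := ⟨w0, hw00, hw0P⟩
  have hne1 : ∃ v : Fin n → ℂ, v ≠ 0 ∧ P.mulVec v = (p1 : ℂ) • v := ⟨w1, hw10, hw1P⟩
  have hherm : ∀ s : ℝ, ((1 - s) • H0 + s • H1).IsHermitian := by
    intro s
    simp [Matrix.IsHermitian, Matrix.conjTranspose_add, Matrix.conjTranspose_smul,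
      star_trivial, hH0.eq, hH1.eq]
  have hcomm : ∀ s : ℝ, ((1 - s) • H0 + s • H1) * P = P * ((1 - s) • H0 + s • H1) := by
    intro s
    rw [Matrix.add_mul, Matrix.mul_add, Matrix.smul_mul, Matrix.smul_mul,
      Matrix.mul_smul, Matrix.mul_smul, hc0, hc1]
  have hL0 : ∀ s : ℝ, IsLeast {E : ℝ | ∃ v : Fin n → ℂ, v ≠ 0 ∧
      P.mulVec v = (p0 : ℂ) • v ∧ ((1 - s) • H0 + s • H1).mulVec v = (E : ℂ) • v}
      (GSLC.ray ((1 - s) • H0 + s • H1) P p0) :=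
    fun s => GSLC.ray_isLeast _ P (hherm s) (hcomm s) p0 hne0
  have hL1 : ∀ s : ℝ, IsLeast {E : ℝ | ∃ v : Fin n → ℂ, v ≠ 0 ∧
      P.mulVec v = (p1 : ℂ) • v ∧ ((1 - s) • H0 + s • H1).mulVec v = (E : ℂ) • v}
      (GSLC.ray ((1 - s) • H0 + s • H1) P p1) :=
    fun s => GSLC.ray_isLeast _ P (hherm s) (hcomm s) p1 hne1
  have hmin0 : ∀ s : ℝ, minInSector ((1 - s) • H0 + s • H1) P p0
      = GSLC.ray ((1 - s) • H0 + s • H1) P p0 := fun s => (hL0 s).csInf_eq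
  have hmin1 : ∀ s : ℝ, minInSector ((1 - s) • H0 + s • H1) P p1
      = GSLC.ray ((1 - s) • H0 + s • H1) P p1 := fun s => (hL1 s).csInf_eq
  set f : ℝ → ℝ := fun s => GSLC.ray ((1 - s) • H0 + s • H1) P p0
      - GSLC.ray ((1 - s) • H0 + s • H1) P p1 with hfdef
  have hcont : Continuous f :=
    (GSLC.ray_continuous H0 H1 P p0 hne0).sub (GSLC.ray_continuous H0 H1 P p1 hne1)
  have hm0 : (1 - (0:ℝ)) • H0 + (0:ℝ) • H1 = H0 := by simp
  have hm1 : (1 - (1:ℝ)) • H0 + (1:ℝ) • H1 = H1 := by simp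
  -- endpoint values
  have hray00 : GSLC.ray H0 P p0 = E0 := by
    have hL := GSLC.ray_isLeast H0 P hH0 hc0 p0 hne0
    refine hL.unique ⟨⟨w0, hw00, hw0P, hw0H⟩, ?_⟩
    rintro E ⟨v, h1, _, h3⟩
    exact hg0.2 ⟨v, h1, h3⟩
  have hray01 : E0 ≤ GSLC.ray H0 P p1 := by
    have hL := GSLC.ray_isLeast H0 P hH0 hc0 p1 hne1
    obtain ⟨v, h1, _, h3⟩ := hL.1
    exact hg0.2 ⟨v, h1, h3⟩
  have hray11 : GSLC.ray H1 P p1 = E1 := by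
    have hL := GSLC.ray_isLeast H1 P hH1 hc1 p1 hne1
    refine hL.unique ⟨⟨w1, hw10, hw1P, hw1H⟩, ?_⟩
    rintro E ⟨v, h1, _, h3⟩
    exact hg1.2 ⟨v, h1, h3⟩
  have hray10 : E1 ≤ GSLC.ray H1 P p0 := by
    have hL := GSLC.ray_isLeast H1 P hH1 hc1 p0 hne0
    obtain ⟨v, h1, _, h3⟩ := hL.1
    exact hg1.2 ⟨v, h1, h3⟩
  have hf0 : f 0 ≤ 0 := by
    have : f 0 = GSLC.ray H0 P p0 - GSLC.ray H0 P p1 := by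
      rw [hfdef]; simp only; rw [hm0]
    rw [this, hray00]
    linarith
  have hf1 : 0 ≤ f 1 := by
    have : f 1 = GSLC.ray H1 P p0 - GSLC.ray H1 P p1 := by
      rw [hfdef]; simp only; rw [hm1]
    rw [this, hray11]
    linarith
  have hsub := intermediate_value_Icc (by norm_num : (0:ℝ) ≤ 1) hcont.continuousOn
  obtain ⟨s, hs, hfs⟩ := hsub ⟨hf0, hf1⟩
  refine ⟨s, hs, ?_⟩
  rw [hmin0 s, hmin1 s]
  have : GSLC.ray ((1 - s) • H0 + s • H1) P p0
      - GSLC.ray ((1 - s) • H0 + s • H1) P p1 = 0 := hfs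
  linarith
end

section
/- Let H be Hermitian on ℋ_C ⊗ ℋ_R with the block structure H = H_C + H_R + F where F = ∑_q X_q Y_q with X_q|0⟩_C = 0, where |0⟩_C is the unique ground state of H_C with energy λ₀ and gap Δ. Then for any normalized state |ψ⟩ orthogonal to the subspace |0⟩_C ⊗ ℋ_R, the energy expectation satisfies ⟨ψ|H|ψ⟩ ≥ λ₀ + Δ + min spec(H_R) - ∑_q ‖X_q‖·‖Y_q‖. -/
open Kronecker Matrix

namespace EnergyLowerBoundAux

noncomputable def ev {k : Type*} [Fintype k] (v : k → ℂ) : EuclideanSpace ℂ k :=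
  (WithLp.equiv 2 _).symm v

lemma ev_norm_sq {k : Type*} [Fintype k] (v : k → ℂ) : ‖ev v‖ ^ 2 = ∑ i, ‖v i‖ ^ 2 := by
  rw [EuclideanSpace.norm_eq, Real.sq_sqrt (by positivity)]
  rfl

lemma mulVec_norm_le {k : ℕ} (M : Matrix (Fin k) (Fin k) ℂ) (v : Fin k → ℂ) :
    ‖ev (M *ᵥ v)‖ ≤ opNorm M * ‖ev v‖ := by
  have h := (Matrix.toEuclideanCLM (𝕜 := ℂ) M).le_opNorm (ev v)
  rwa [show (Matrix.toEuclideanCLM (𝕜 := ℂ) M) (ev v) = ev (M *ᵥ v) from by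
    simp [ev, Matrix.toEuclideanCLM_toLp, Matrix.toLin'_apply]] at h

lemma mulVec_nsq_le {k : ℕ} (M : Matrix (Fin k) (Fin k) ℂ) (v : Fin k → ℂ) :
    ∑ i, ‖(M *ᵥ v) i‖ ^ 2 ≤ opNorm M ^ 2 * ∑ i, ‖v i‖ ^ 2 := by
  have h := mulVec_norm_le M v
  have h2 : ‖ev (M *ᵥ v)‖ ^ 2 ≤ (opNorm M * ‖ev v‖) ^ 2 :=
    pow_le_pow_left₀ (norm_nonneg _) h 2
  rw [mul_pow, ev_norm_sq, ev_norm_sq] at h2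
  exact h2

lemma kron_one_apply {n m : ℕ} (M : Matrix (Fin n) (Fin n) ℂ) (v : Fin n × Fin m → ℂ)
    (i : Fin n) (j : Fin m) :
    ((M ⊗ₖ (1 : Matrix (Fin m) (Fin m) ℂ)) *ᵥ v) (i, j) = (M *ᵥ fun k => v (k, j)) i := by
  simp [Matrix.mulVec, dotProduct, Fintype.sum_prod_type, Matrix.one_apply]

lemma one_kron_apply {n m : ℕ} (N : Matrix (Fin m) (Fin m) ℂ) (v : Fin n × Fin m → ℂ)
    (i : Fin n) (j : Fin m) :
    (((1 : Matrix (Fin n) (Fin n) ℂ) ⊗ₖ N) *ᵥ v) (i, j) = (N *ᵥ fun l => v (i, l)) j := by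
  simp [Matrix.mulVec, dotProduct, Fintype.sum_prod_type, Matrix.one_apply]

lemma herm_qf_ge {k : ℕ} (M : Matrix (Fin k) (Fin k) ℂ) (hM : M.IsHermitian) (c : ℝ)
    (w : Fin k → ℂ)
    (h : ∀ i, c ≤ hM.eigenvalues i ∨ star (⇑(hM.eigenvectorBasis i) : Fin k → ℂ) ⬝ᵥ w = 0) :
    c * ∑ i, ‖w i‖ ^ 2 ≤ (star w ⬝ᵥ M *ᵥ w).re := by
  classical
  set b := hM.eigenvectorBasis with hb
  set coef : Fin k → ℂ := fun i => star (⇑(b i) : Fin k → ℂ) ⬝ᵥ w with hcoef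
  have hinner : ∀ i, (inner ℂ (b i) (ev w) : ℂ) = coef i := by
    intro i
    rw [EuclideanSpace.inner_eq_star_dotProduct, dotProduct_comm]
    rfl
  have hMw : ∀ i, star (⇑(b i) : Fin k → ℂ) ⬝ᵥ (M *ᵥ w) = (hM.eigenvalues i : ℂ) * coef i := by
    intro i
    rw [Matrix.dotProduct_mulVec]
    have h1 : star (⇑(b i) : Fin k → ℂ) ᵥ* M = star (Mᴴ *ᵥ ⇑(b i)) := by
      rw [Matrix.star_mulVec, Matrix.conjTranspose_conjTranspose]
    rw [h1, hM.eq, hM.mulVec_eigenvectorBasis]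
    have : star ((hM.eigenvalues i) • (⇑(b i) : Fin k → ℂ))
        = (hM.eigenvalues i : ℂ) • star (⇑(b i) : Fin k → ℂ) := by
      ext x; simp [star_smul]
    rw [this, smul_dotProduct, smul_eq_mul]
  have hqf : star w ⬝ᵥ M *ᵥ w
      = ∑ i, (starRingEnd ℂ) (coef i) * ((hM.eigenvalues i : ℂ) * coef i) := by
    have := OrthonormalBasis.sum_inner_mul_inner b (ev w) (ev (M *ᵥ w))
    have hlhs : (inner ℂ (ev w) (ev (M *ᵥ w)) : ℂ) = star w ⬝ᵥ M *ᵥ w := by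
      rw [EuclideanSpace.inner_eq_star_dotProduct, dotProduct_comm]; rfl
    rw [hlhs] at this
    rw [← this]
    congr 1
    ext i
    rw [← inner_conj_symm, hinner i]
    have : (inner ℂ (b i) (ev (M *ᵥ w)) : ℂ) = (hM.eigenvalues i : ℂ) * coef i := by
      rw [EuclideanSpace.inner_eq_star_dotProduct, dotProduct_comm]
      exact hMw i
    rw [this]
  have hre : (star w ⬝ᵥ M *ᵥ w).re = ∑ i, hM.eigenvalues i * ‖coef i‖ ^ 2 := by
    rw [hqf, Complex.re_sum]
    congr 1; ext i
    have : (starRingEnd ℂ) (coef i) * ((hM.eigenvalues i : ℂ) * coef i)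
        = (hM.eigenvalues i : ℂ) * ((starRingEnd ℂ) (coef i) * coef i) := by ring
    rw [this, ← Complex.normSq_eq_conj_mul_self, ← Complex.ofReal_mul, Complex.ofReal_re,
      Complex.normSq_eq_norm_sq]
  have hpars : ∑ i, ‖coef i‖ ^ 2 = ∑ i, ‖w i‖ ^ 2 := by
    have h1 : ‖ev w‖ ^ 2 = ∑ i, ‖coef i‖ ^ 2 := by
      rw [← b.repr.norm_map (ev w), EuclideanSpace.norm_eq, Real.sq_sqrt (by positivity)]
      congr 1; ext i
      rw [b.repr_apply_apply, hinner i]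
    rw [← h1, EuclideanSpace.norm_eq, Real.sq_sqrt (by positivity)]
    rfl
  rw [hre, ← hpars, Finset.mul_sum]
  apply Finset.sum_le_sum
  intro i _
  rcases h i with hc | hz
  · exact mul_le_mul_of_nonneg_right hc (by positivity)
  · rw [show coef i = 0 from hz]; simp

end EnergyLowerBoundAux

open EnergyLowerBoundAux

/-- Lower bound on states outside the superstable subspace: for
`H = H_C ⊗ 1 + 1 ⊗ H_R + ∑_q X_q ⊗ Y_q` with `X_q gC = 0`, where `gC` is the unique
ground state of `H_C` (energy `lam0`, gap `Δ`), any normalized `ψ` orthogonal to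
`gC ⊗ ℋ_R` satisfies `⟨ψ|H|ψ⟩ ≥ lam0 + Δ + min spec H_R - ∑_q ‖X_q‖ ‖Y_q‖`. -/
theorem energy_lower_bound_outside_superstable_subspace
    {n m Q : ℕ} (HC : Matrix (Fin n) (Fin n) ℂ) (HR : Matrix (Fin m) (Fin m) ℂ)
    (X : Fin Q → Matrix (Fin n) (Fin n) ℂ) (Y : Fin Q → Matrix (Fin m) (Fin m) ℂ)
    (lam0 Δ lamR : ℝ)
    (hHCherm : HC.IsHermitian) (hHRherm : HR.IsHermitian)
    (H : Matrix (Fin n × Fin m) (Fin n × Fin m) ℂ)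
    (hH : H = HC ⊗ₖ (1 : Matrix (Fin m) (Fin m) ℂ)
        + (1 : Matrix (Fin n) (Fin n) ℂ) ⊗ₖ HR + ∑ q, X q ⊗ₖ Y q)
    (hHerm : H.IsHermitian)
    (gC : Fin n → ℂ) (hgC : gC ≠ 0) (heig : HC.mulVec gC = (lam0 : ℂ) • gC)
    (hΔ : 0 < Δ)
    (hgap : ∀ (v : Fin n → ℂ) (μ : ℝ), v ≠ 0 → HC.mulVec v = (μ : ℂ) • v →
      μ = lam0 ∨ lam0 + Δ ≤ μ)
    (hsimple : ∀ v : Fin n → ℂ, HC.mulVec v = (lam0 : ℂ) • v → ∃ c : ℂ, v = c • gC)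
    (hX : ∀ q, (X q).mulVec gC = 0)
    (hlamR : IsLeast {μ : ℝ | ∃ φ : Fin m → ℂ, φ ≠ 0 ∧ HR.mulVec φ = (μ : ℂ) • φ} lamR)
    (ψ : Fin n × Fin m → ℂ) (hnorm : star ψ ⬝ᵥ ψ = 1)
    (horth : ∀ φ : Fin m → ℂ,
      star (fun p : Fin n × Fin m => gC p.1 * φ p.2) ⬝ᵥ ψ = 0) :
    lam0 + Δ + lamR - ∑ q, opNorm (X q) * opNorm (Y q)
      ≤ (star ψ ⬝ᵥ H.mulVec ψ).re := by
  classical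
  set ψC : Fin m → Fin n → ℂ := fun j i => ψ (i, j) with hψC
  set ψR : Fin n → Fin m → ℂ := fun i j => ψ (i, j) with hψR
  -- total norm
  have hnsq : ∑ p : Fin n × Fin m, ‖ψ p‖ ^ 2 = 1 := by
    have : star ψ ⬝ᵥ ψ = ((∑ p : Fin n × Fin m, ‖ψ p‖ ^ 2 : ℝ) : ℂ) := by
      simp only [dotProduct, Pi.star_apply, Complex.ofReal_sum]
      congr 1; ext p
      rw [show star (ψ p) = (starRingEnd ℂ) (ψ p) from rfl, ← Complex.normSq_eq_conj_mul_self,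
        Complex.normSq_eq_norm_sq]
    rw [this] at hnorm
    exact_mod_cast hnorm
  -- orthogonality in sliced form
  have horthC : ∀ j, star gC ⬝ᵥ ψC j = 0 := by
    intro j
    have h := horth (Pi.single j 1)
    simp only [dotProduct, Pi.star_apply, Fintype.sum_prod_type] at h ⊢
    rw [← h]
    congr 1; ext i
    rw [Finset.sum_eq_single j]
    · simp [hψC]
    · intro l _ hl; simp [Pi.single_apply, hl]
    · simp
  -- Term C bound
  have hTC : lam0 + Δ ≤ (star ψ ⬝ᵥ (HC ⊗ₖ (1 : Matrix (Fin m) (Fin m) ℂ)) *ᵥ ψ).re := by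
    have hslice : star ψ ⬝ᵥ (HC ⊗ₖ (1 : Matrix (Fin m) (Fin m) ℂ)) *ᵥ ψ
        = ∑ j, star (ψC j) ⬝ᵥ HC *ᵥ ψC j := by
      simp only [dotProduct, Pi.star_apply, Fintype.sum_prod_type]
      rw [Finset.sum_comm]
      congr 1; ext j
      congr 1; ext i
      rw [kron_one_apply]
    have hbound : ∀ j, (lam0 + Δ) * ∑ i, ‖ψC j i‖ ^ 2
        ≤ (star (ψC j) ⬝ᵥ HC *ᵥ ψC j).re := by
      intro j
      apply herm_qf_ge HC hHCherm
      intro i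
      set b := hHCherm.eigenvectorBasis
      have hbne : (⇑(b i) : Fin n → ℂ) ≠ 0 := by
        intro h0
        apply hHCherm.eigenvectorBasis.orthonormal.ne_zero i
        ext x
        exact congrFun h0 x
      have heq : HC *ᵥ (⇑(b i) : Fin n → ℂ) = ((hHCherm.eigenvalues i : ℂ)) • ⇑(b i) := by
        rw [hHCherm.mulVec_eigenvectorBasis]
        ext x; simp [Complex.real_smul, b]
      rcases hgap (⇑(b i)) (hHCherm.eigenvalues i) hbne heq with h0 | hge
      · right
        obtain ⟨c, hc⟩ := hsimple (⇑(b i)) (by rw [heq, h0])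
        rw [hc]
        have : star (c • gC) = (starRingEnd ℂ c) • star gC := by
          ext x; simp [star_smul]
        rw [this, smul_dotProduct, horthC j, smul_zero]
      · left; exact hge
    have hsum : ∑ j, ∑ i, ‖ψC j i‖ ^ 2 = 1 := by
      rw [← hnsq, Fintype.sum_prod_type, Finset.sum_comm]
    calc lam0 + Δ = ∑ j, (lam0 + Δ) * ∑ i, ‖ψC j i‖ ^ 2 := by
          rw [← Finset.mul_sum, hsum, mul_one]
      _ ≤ ∑ j, (star (ψC j) ⬝ᵥ HC *ᵥ ψC j).re := Finset.sum_le_sum fun j _ => hbound j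
      _ = (star ψ ⬝ᵥ (HC ⊗ₖ (1 : Matrix (Fin m) (Fin m) ℂ)) *ᵥ ψ).re := by
          rw [hslice, Complex.re_sum]
  -- Term R bound
  have hTR : lamR ≤ (star ψ ⬝ᵥ ((1 : Matrix (Fin n) (Fin n) ℂ) ⊗ₖ HR) *ᵥ ψ).re := by
    have hslice : star ψ ⬝ᵥ ((1 : Matrix (Fin n) (Fin n) ℂ) ⊗ₖ HR) *ᵥ ψ
        = ∑ i, star (ψR i) ⬝ᵥ HR *ᵥ ψR i := by
      simp only [dotProduct, Pi.star_apply, Fintype.sum_prod_type]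
      congr 1; ext i
      congr 1; ext j
      rw [one_kron_apply]
    have hbound : ∀ i, lamR * ∑ j, ‖ψR i j‖ ^ 2 ≤ (star (ψR i) ⬝ᵥ HR *ᵥ ψR i).re := by
      intro i
      apply herm_qf_ge HR hHRherm
      intro j
      left
      apply hlamR.2
      refine ⟨⇑(hHRherm.eigenvectorBasis j), ?_, ?_⟩
      · intro h0
        apply hHRherm.eigenvectorBasis.orthonormal.ne_zero j
        ext x
        exact congrFun h0 x
      · rw [hHRherm.mulVec_eigenvectorBasis]
        ext x; simp [Complex.real_smul]
    have hsum : ∑ i, ∑ j, ‖ψR i j‖ ^ 2 = 1 := by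
      rw [← hnsq, Fintype.sum_prod_type]
    calc lamR = ∑ i, lamR * ∑ j, ‖ψR i j‖ ^ 2 := by rw [← Finset.mul_sum, hsum, mul_one]
      _ ≤ ∑ i, (star (ψR i) ⬝ᵥ HR *ᵥ ψR i).re := Finset.sum_le_sum fun i _ => hbound i
      _ = (star ψ ⬝ᵥ ((1 : Matrix (Fin n) (Fin n) ℂ) ⊗ₖ HR) *ᵥ ψ).re := by
          rw [hslice, Complex.re_sum]
  -- coupling term bound
  have hTQ : ∀ q, -(opNorm (X q) * opNorm (Y q))
      ≤ (star ψ ⬝ᵥ (X q ⊗ₖ Y q) *ᵥ ψ).re := by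
    intro q
    set u : Fin n × Fin m → ℂ := (X q ⊗ₖ Y q) *ᵥ ψ with hu
    set w : Fin n × Fin m → ℂ := ((1 : Matrix (Fin n) (Fin n) ℂ) ⊗ₖ Y q) *ᵥ ψ with hw
    have hfac : u = (X q ⊗ₖ (1 : Matrix (Fin m) (Fin m) ℂ)) *ᵥ w := by
      rw [hu, hw, Matrix.mulVec_mulVec, ← Matrix.mul_kronecker_mul, Matrix.mul_one,
        Matrix.one_mul]
    have hwnsq : ∑ p : Fin n × Fin m, ‖w p‖ ^ 2 ≤ opNorm (Y q) ^ 2 := by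
      calc ∑ p : Fin n × Fin m, ‖w p‖ ^ 2
          = ∑ i, ∑ j, ‖(Y q *ᵥ ψR i) j‖ ^ 2 := by
            rw [Fintype.sum_prod_type]
            congr 1; ext i; congr 1; ext j
            rw [hw, one_kron_apply]
        _ ≤ ∑ i, opNorm (Y q) ^ 2 * ∑ j, ‖ψR i j‖ ^ 2 :=
            Finset.sum_le_sum fun i _ => mulVec_nsq_le (Y q) (ψR i)
        _ = opNorm (Y q) ^ 2 := by
            rw [← Finset.mul_sum, show ∑ i, ∑ j, ‖ψR i j‖ ^ 2 = 1 from by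
              rw [← hnsq, Fintype.sum_prod_type], mul_one]
    have hunsq : ∑ p : Fin n × Fin m, ‖u p‖ ^ 2 ≤ (opNorm (X q) * opNorm (Y q)) ^ 2 := by
      calc ∑ p : Fin n × Fin m, ‖u p‖ ^ 2
          = ∑ j, ∑ i, ‖(X q *ᵥ fun k => w (k, j)) i‖ ^ 2 := by
            rw [Fintype.sum_prod_type, Finset.sum_comm]
            congr 1; ext j; congr 1; ext i
            rw [hfac, kron_one_apply]
        _ ≤ ∑ j, opNorm (X q) ^ 2 * ∑ i, ‖w (i, j)‖ ^ 2 :=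
            Finset.sum_le_sum fun j _ => mulVec_nsq_le (X q) _
        _ = opNorm (X q) ^ 2 * ∑ p : Fin n × Fin m, ‖w p‖ ^ 2 := by
            rw [← Finset.mul_sum, Fintype.sum_prod_type, Finset.sum_comm]
        _ ≤ opNorm (X q) ^ 2 * opNorm (Y q) ^ 2 := by
            apply mul_le_mul_of_nonneg_left hwnsq (by positivity)
        _ = (opNorm (X q) * opNorm (Y q)) ^ 2 := by ring
    have habs : ‖star ψ ⬝ᵥ u‖ ≤ opNorm (X q) * opNorm (Y q) := by
      have hCS : ‖(inner ℂ (ev ψ) (ev u) : ℂ)‖ ≤ ‖ev ψ‖ * ‖ev u‖ := norm_inner_le_norm _ _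
      have hψ1 : ‖ev ψ‖ = 1 := by
        have := ev_norm_sq ψ
        rw [hnsq] at this
        nlinarith [norm_nonneg (ev ψ)]
      have hun : ‖ev u‖ ≤ opNorm (X q) * opNorm (Y q) := by
        have h1 := ev_norm_sq u
        have h2 : 0 ≤ opNorm (X q) * opNorm (Y q) :=
          mul_nonneg (norm_nonneg _) (norm_nonneg _)
        nlinarith [norm_nonneg (ev u), hunsq]
      have hid : (inner ℂ (ev ψ) (ev u) : ℂ) = star ψ ⬝ᵥ u := by
        rw [EuclideanSpace.inner_eq_star_dotProduct, dotProduct_comm]; rfl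
      rw [hid, hψ1, one_mul] at hCS
      exact hCS.trans hun
    have : -(opNorm (X q) * opNorm (Y q)) ≤ (star ψ ⬝ᵥ u).re := by
      have h1 : |(star ψ ⬝ᵥ u).re| ≤ ‖star ψ ⬝ᵥ u‖ := Complex.abs_re_le_norm _
      have h2 := neg_abs_le ((star ψ ⬝ᵥ u).re)
      linarith
    exact this
  -- assemble
  have hsplit : (star ψ ⬝ᵥ H *ᵥ ψ).re
      = (star ψ ⬝ᵥ (HC ⊗ₖ (1 : Matrix (Fin m) (Fin m) ℂ)) *ᵥ ψ).re
        + (star ψ ⬝ᵥ ((1 : Matrix (Fin n) (Fin n) ℂ) ⊗ₖ HR) *ᵥ ψ).re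
        + ∑ q, (star ψ ⬝ᵥ (X q ⊗ₖ Y q) *ᵥ ψ).re := by
    rw [hH]
    simp only [Matrix.add_mulVec, dotProduct_add, Complex.add_re]
    congr 1
    have h1 : (∑ q, X q ⊗ₖ Y q) *ᵥ ψ = ∑ q, (X q ⊗ₖ Y q) *ᵥ ψ := by
      ext p
      simp only [Matrix.mulVec, dotProduct, Matrix.sum_apply, Finset.sum_mul]
      rw [Finset.sum_comm]
      simp [Matrix.mulVec, dotProduct, Finset.sum_apply]
    have h2 : star ψ ⬝ᵥ (∑ q, (X q ⊗ₖ Y q) *ᵥ ψ) = ∑ q, star ψ ⬝ᵥ ((X q ⊗ₖ Y q) *ᵥ ψ) := by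
      simp only [dotProduct, Finset.sum_apply, Finset.mul_sum]
      rw [Finset.sum_comm]
    rw [h1, h2, Complex.re_sum]
  rw [hsplit]
  have hsumQ : -(∑ q, opNorm (X q) * opNorm (Y q))
      ≤ ∑ q, (star ψ ⬝ᵥ (X q ⊗ₖ Y q) *ᵥ ψ).re := by
    rw [← Finset.sum_neg_distrib]
    exact Finset.sum_le_sum fun q _ => hTQ q
  linarith
end
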